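/- arXiv:1812.08702 — 2 statements merged into one kernel-verified Lean document; each statement's English description precedes it below -/
import Mathlib

section
/- Let p ≥ 5 be a prime with p ≡ 2 (mod 3). Then for all nonnegative integers n, EO-bar(p^2 n + (p^2 - 1)/3) ≡ EO-bar(n) (mod 2). -/
open PowerSeries

/-- `(q^a; q^c)_∞ = ∏_{i ≥ 0} (1 - q^{a + c·i})` as a formal power series in `q = X`
(for `a ≥ 1`, the `n`-th coefficient only depends on the first `n+1` factors). -/
noncomputable def qp (a c : ℕ) : PowerSeries ℚ :=
  PowerSeries.mk fun n =>
    PowerSeries.coeff n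
      (∏ i ∈ Finset.range (n + 1), (1 - (PowerSeries.X : PowerSeries ℚ) ^ (a + c * i)))

open Finset

/-- Parity lemma: a fixed-point-free involution on a finset makes its card even. -/
lemma even_card_of_invol {α : Type*} [DecidableEq α] (s : Finset α) (f : α → α)
    (hmem : ∀ a ∈ s, f a ∈ s) (hinv : ∀ a ∈ s, f (f a) = a) (hne : ∀ a ∈ s, f a ≠ a) :
    Even s.card := by
  induction s using Finset.strongInduction with
  | _ s ih =>
    rcases s.eq_empty_or_nonempty with rfl | ⟨a, ha⟩
    · simp
    · have hfa : f a ∈ s := hmem a ha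
      have hane : f a ≠ a := hne a ha
      set t := (s.erase a).erase (f a) with ht
      have htsub : t ⊆ s := (erase_subset _ _).trans (erase_subset _ _)
      have htss : t ⊂ s := htsub.ssubset_of_ne (by
        intro h
        have : a ∈ t := h ▸ ha
        simp [ht] at this)
      have hmaint : ∀ b ∈ t, b ∈ s ∧ b ≠ a ∧ b ≠ f a := by
        intro b hb
        simp only [ht, mem_erase] at hb
        exact ⟨hb.2.2, hb.2.1, hb.1⟩
      have hft : ∀ b ∈ t, f b ∈ t := by
        intro b hb
        obtain ⟨hbs, hba, hbfa⟩ := hmaint b hb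
        have hfb : f b ∈ s := hmem b hbs
        simp only [ht, mem_erase]
        refine ⟨?_, ?_, hfb⟩
        · intro h
          exact hba (by rw [← hinv b hbs, h, hinv a ha])
        · intro h
          exact hbfa (by rw [← hinv b hbs, h])
      have heven := ih t htss hft
        (fun b hb => hinv b (hmaint b hb).1) (fun b hb => hne b (hmaint b hb).1)
      have hcard : s.card = t.card + 2 := by
        have h1 : (s.erase a).card = s.card - 1 := card_erase_of_mem ha
        have h2 : t.card = (s.erase a).card - 1 :=
          card_erase_of_mem (mem_erase.2 ⟨hane, hfa⟩)
        have h3 : 1 ≤ s.card := card_pos.2 ⟨a, ha⟩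
        have h4 : 2 ≤ s.card := by
          have : ({a, f a} : Finset α) ⊆ s := by
            intro x hx; simp at hx; rcases hx with rfl | rfl <;> assumption
          have hc : ({a, f a} : Finset α).card = 2 := by
            rw [card_insert_of_notMem (by simpa using hane.symm), card_singleton]
          calc 2 = ({a, f a} : Finset α).card := hc.symm
            _ ≤ s.card := card_le_card this
        omega
      rw [hcard]
      exact heven.add (even_iff_two_dvd.2 ⟨1, rfl⟩)

/-- Gauss sum over an interval, subtraction-free form. -/
lemma two_mul_sum_Icc (a k : ℕ) : 2 * (∑ x ∈ Icc a (a + k), x) = (2 * a + k) * (k + 1) := by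
  induction k with
  | zero => simp [mul_comm]
  | succ k ihk =>
    have : Icc a (a + (k+1)) = insert (a + k + 1) (Icc a (a + k)) := by
      rw [show a + (k+1) = (a+k) + 1 by omega, ← Finset.insert_Icc_right_eq_Icc_add_one (by omega)]
    rw [show a + (k+1) = a + k + 1 by omega] at *
    rw [this, Finset.sum_insert (by simp), mul_add, ihk]
    ring

section MoveA
variable (S : Finset ℕ) (m s c : ℕ)

lemma moveA (h0 : 0 ∉ S) (hm : m ∈ S) (hub : ∀ x ∈ S, x ≤ m)
    (hs : s ∈ S) (hlb : ∀ x ∈ S, s ≤ x)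
    (hc : c ∉ S) (hcm : c < m) (hrun : ∀ k, c < k → k ≤ m → k ∈ S)
    (hsr : s ≤ m - c) (h2s : 2*s ≤ m) :
    0 ∉ ((S.erase s \ Icc (m-s+1) m) ∪ Icc (m-s+2) (m+1)) ∧
    ((S.erase s \ Icc (m-s+1) m) ∪ Icc (m-s+2) (m+1)).sum id = S.sum id ∧
    (m+1) ∈ ((S.erase s \ Icc (m-s+1) m) ∪ Icc (m-s+2) (m+1)) ∧
    (∀ x ∈ ((S.erase s \ Icc (m-s+1) m) ∪ Icc (m-s+2) (m+1)), x ≤ m+1) ∧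
    (∀ x ∈ ((S.erase s \ Icc (m-s+1) m) ∪ Icc (m-s+2) (m+1)), s < x) ∧
    (m-s+1) ∉ ((S.erase s \ Icc (m-s+1) m) ∪ Icc (m-s+2) (m+1)) ∧
    (∀ k, m-s+1 < k → k ≤ m+1 → k ∈ ((S.erase s \ Icc (m-s+1) m) ∪ Icc (m-s+2) (m+1))) ∧
    ((((S.erase s \ Icc (m-s+1) m) ∪ Icc (m-s+2) (m+1)) \ Icc (m-s+2) (m+1)) ∪ Icc (m-s+1) m ∪ {s} = S) ∧
    (∀ a b, a ≤ b → ((S.erase s \ Icc (m-s+1) m) ∪ Icc (m-s+2) (m+1)) = Icc a b → a = m-s+2 ∧ b = m+1) := by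
  have hs1 : 1 ≤ s := Nat.pos_of_ne_zero (fun h => h0 (h ▸ hs))
  have hsm : s ≤ m := hub s hs
  have hcs : c + s ≤ m := by omega
  set rest := S.erase s \ Icc (m-s+1) m with hrest
  set block := Icc (m-s+1) m with hblock
  set block' := Icc (m-s+2) (m+1) with hblock'
  have hblockS : ∀ k ∈ block, k ∈ S := by
    intro k hk
    rw [hblock, mem_Icc] at hk
    exact hrun k (by omega) hk.2
  have hrest_mem : ∀ x, x ∈ rest ↔ (x ∈ S ∧ x ≠ s ∧ x < m-s+1) := by
    intro x
    rw [hrest, mem_sdiff, mem_erase, hblock, mem_Icc]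
    constructor
    · rintro ⟨⟨hxs, hxS⟩, hxb⟩
      exact ⟨hxS, hxs, by have := hub x hxS; omega⟩
    · rintro ⟨hxS, hxs, hxlt⟩
      exact ⟨⟨hxs, hxS⟩, by omega⟩
  have hA_mem : ∀ x, x ∈ rest ∪ block' ↔ ((x ∈ S ∧ x ≠ s ∧ x < m-s+1) ∨ (m-s+2 ≤ x ∧ x ≤ m+1)) := by
    intro x
    rw [mem_union, hrest_mem, hblock', mem_Icc]
  refine ⟨?_, ?_, ?_, ?_, ?_, ?_, ?_, ?_, ?_⟩
  · rw [hA_mem]; rintro (⟨h,_,_⟩|⟨h,_⟩); exacts [h0 h, by omega]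
  · -- sums
    have hSdecomp : S = (rest ∪ block) ∪ {s} := by
      ext x
      rw [mem_union, mem_union, hrest_mem, hblock, mem_Icc, mem_singleton]
      constructor
      · intro hxS
        have h1 := hub x hxS
        by_cases hx1 : x = s
        · tauto
        · by_cases hx2 : m-s+1 ≤ x
          · tauto
          · exact Or.inl (Or.inl ⟨hxS, hx1, by omega⟩)
      · rintro ((⟨h,_,_⟩|⟨h1,h2⟩)|rfl)
        exacts [h, hrun x (by omega) h2, hs]
    have d1 : Disjoint rest block := sdiff_disjoint
    have d2 : Disjoint (rest ∪ block) {s} := by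
      rw [disjoint_singleton_right, mem_union, hrest_mem, hblock, mem_Icc]
      rintro (⟨_,h,_⟩|⟨h1,h2⟩)
      exacts [h rfl, by omega]
    have d3 : Disjoint rest block' := by
      rw [disjoint_left]
      intro x hx hx'
      rw [hrest_mem] at hx
      rw [hblock', mem_Icc] at hx'
      omega
    have hsum : S.sum id = rest.sum id + block.sum id + s := by
      conv_lhs => rw [hSdecomp]
      rw [sum_union d2, sum_union d1, sum_singleton]
      rfl
    have hbcard : block.card = s := by rw [hblock, Nat.card_Icc]; omega
    have hbsum : block'.sum id = block.sum id + s := by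
      have him : block' = block.image (· + 1) := by
        rw [hblock, image_add_right_Icc, hblock']
      rw [him, sum_image (by intro x _ y _ h; simp only at h; omega)]
      simp only [id_eq]
      rw [sum_add_distrib, sum_const, smul_eq_mul, mul_one, ← hbcard]
    have hsum' : (rest ∪ block').sum id = rest.sum id + block'.sum id := sum_union d3
    rw [hsum', hbsum, hsum]
    omega
  · rw [hA_mem]; right; omega
  · intro x hx; rw [hA_mem] at hx
    rcases hx with ⟨h,_,_⟩|⟨_,h⟩
    · have := hub x h; omega
    · omega
  · intro x hx; rw [hA_mem] at hx
    rcases hx with ⟨h1,h2,_⟩|⟨h,_⟩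
    · have := hlb x h1; omega
    · omega
  · rw [hA_mem]
    rintro (⟨_,_,h⟩|⟨h,_⟩) <;> omega
  · intro k h1 h2; rw [hA_mem]; right; omega
  · -- reconstruction
    have hAd : (rest ∪ block') \ block' = rest := by
      rw [union_sdiff_right]
      refine Finset.sdiff_eq_self_iff_disjoint.2 ?_
      rw [disjoint_left]
      intro x hx hx'
      rw [hrest_mem] at hx
      rw [hblock', mem_Icc] at hx'
      omega
    rw [hAd]
    ext x
    rw [mem_union, mem_union, hrest_mem, hblock, mem_Icc, mem_singleton]
    constructor
    · rintro ((⟨h,_,_⟩|⟨h1,h2⟩)|rfl)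
      exacts [h, hrun x (by omega) h2, hs]
    · intro hxS
      have h1 := hub x hxS
      by_cases hx1 : x = s
      · tauto
      · by_cases hx2 : m-s+1 ≤ x
        · tauto
        · exact Or.inl (Or.inl ⟨hxS, hx1, by omega⟩)
  · intro a b hab hE
    have hm1 : m+1 ∈ Icc a b := by rw [← hE, hA_mem]; right; omega
    have hms2 : m-s+2 ∈ Icc a b := by rw [← hE, hA_mem]; right; omega
    have hbmem : b ∈ Icc a b := mem_Icc.2 ⟨hab, le_rfl⟩
    have hbA := hbmem
    rw [← hE, hA_mem] at hbA
    have hamem : a ∈ Icc a b := mem_Icc.2 ⟨le_rfl, hab⟩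
    have haA := hamem
    rw [← hE, hA_mem] at haA
    rw [mem_Icc] at hm1 hms2
    have hb : b = m + 1 := by
      rcases hbA with ⟨h,_,_⟩|⟨_,h⟩
      · have := hub b h; omega
      · omega
    rcases haA with ⟨_,_,ha3⟩|⟨ha1,_⟩
    · -- a < m-s+1 : then m-s+1 ∈ Icc a b = A, contradiction
      exfalso
      have : m-s+1 ∈ Icc a b := mem_Icc.2 ⟨by omega, by omega⟩
      rw [← hE, hA_mem] at this
      rcases this with ⟨_,_,h⟩|⟨h,_⟩ <;> omega
    · exact ⟨by omega, hb⟩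
end MoveA

section MoveB
variable (S : Finset ℕ) (m s c : ℕ)

lemma moveB (h0 : 0 ∉ S) (hm : m ∈ S) (hub : ∀ x ∈ S, x ≤ m)
    (hs : s ∈ S) (hlb : ∀ x ∈ S, s ≤ x)
    (hc : c ∉ S) (hcm : c < m) (hrun : ∀ k, c < k → k ≤ m → k ∈ S)
    (hrs : m - c < s) (hrc : m - c < c) :
    0 ∉ ((S \ Icc (c+1) m) ∪ Icc c (m-1) ∪ {m-c}) ∧
    ((S \ Icc (c+1) m) ∪ Icc c (m-1) ∪ {m-c}).sum id = S.sum id ∧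
    (m-c) ∈ ((S \ Icc (c+1) m) ∪ Icc c (m-1) ∪ {m-c}) ∧
    (∀ x ∈ ((S \ Icc (c+1) m) ∪ Icc c (m-1) ∪ {m-c}), m-c ≤ x) ∧
    (m-1) ∈ ((S \ Icc (c+1) m) ∪ Icc c (m-1) ∪ {m-c}) ∧
    (∀ x ∈ ((S \ Icc (c+1) m) ∪ Icc c (m-1) ∪ {m-c}), x ≤ m-1) ∧
    (∀ k, c ≤ k → k ≤ m-1 → k ∈ ((S \ Icc (c+1) m) ∪ Icc c (m-1) ∪ {m-c})) ∧
    ((((S \ Icc (c+1) m) ∪ Icc c (m-1) ∪ {m-c}).erase (m-c) \ Icc c (m-1)) ∪ Icc (c+1) m = S) ∧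
    (∀ a b, a ≤ b → ((S \ Icc (c+1) m) ∪ Icc c (m-1) ∪ {m-c}) = Icc a b → a = m-c ∧ b = m-1) := by
  have hs1 : 1 ≤ s := Nat.pos_of_ne_zero (fun h => h0 (h ▸ hs))
  have hsm : s ≤ m := hub s hs
  have hr1 : 1 ≤ m - c := by omega
  have hsc : s ≤ c + 1 := hlb (c+1) (hrun (c+1) (by omega) (by omega))
  set rest := S \ Icc (c+1) m with hrest
  set run := Icc (c+1) m with hrunn
  set run' := Icc c (m-1) with hrun'
  have hrunS : run ⊆ S := by
    intro k hk
    rw [hrunn, mem_Icc] at hk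
    exact hrun k (by omega) hk.2
  have hrest_mem : ∀ x, x ∈ rest ↔ (x ∈ S ∧ x < c) := by
    intro x
    rw [hrest, mem_sdiff, hrunn, mem_Icc]
    constructor
    · rintro ⟨hxS, hxb⟩
      have h1 := hub x hxS
      have h2 : x ≠ c := fun h => hc (h ▸ hxS)
      exact ⟨hxS, by omega⟩
    · rintro ⟨hxS, hxc⟩
      exact ⟨hxS, by omega⟩
  have hB_mem : ∀ x, x ∈ (rest ∪ run' ∪ {m-c}) ↔
      ((x ∈ S ∧ x < c) ∨ (c ≤ x ∧ x ≤ m-1) ∨ x = m-c) := by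
    intro x
    rw [mem_union, mem_union, hrest_mem, hrun', mem_Icc, mem_singleton, or_assoc]
  refine ⟨?_, ?_, ?_, ?_, ?_, ?_, ?_, ?_, ?_⟩
  · rw [hB_mem]
    rintro (⟨h,_⟩|⟨h1,h2⟩|h) <;> first | exact h0 h | omega
  · -- sums
    have hsum : rest.sum id + run.sum id = S.sum id := sum_sdiff hrunS
    have hrcard : run'.card = m - c := by rw [hrun', Nat.card_Icc]; omega
    have hrsum : run.sum id = run'.sum id + (m - c) := by
      have him : run = run'.image (· + 1) := by
        rw [hrun', image_add_right_Icc, hrunn, show m-1+1 = m by omega]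
      rw [him, sum_image (by intro x _ y _ h; simp only at h; omega)]
      simp only [id_eq]
      rw [sum_add_distrib, sum_const, smul_eq_mul, mul_one, hrcard]
    have d1 : Disjoint rest run' := by
      rw [disjoint_left]
      intro x hx hx'
      rw [hrest_mem] at hx
      rw [hrun', mem_Icc] at hx'
      omega
    have d2 : Disjoint (rest ∪ run') {m-c} := by
      rw [disjoint_singleton_right, mem_union, hrest_mem, hrun', mem_Icc]
      rintro (⟨h1,h2⟩|⟨h1,h2⟩)
      · have := hlb _ h1; omega
      · omega
    have : (rest ∪ run' ∪ {m-c}).sum id = rest.sum id + run'.sum id + (m-c) := by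
      rw [sum_union d2, sum_union d1, sum_singleton]
      rfl
    rw [this]
    omega
  · rw [hB_mem]; tauto
  · intro x hx; rw [hB_mem] at hx
    rcases hx with ⟨h1,_⟩|⟨h1,h2⟩|h
    · have := hlb x h1; omega
    · omega
    · omega
  · rw [hB_mem]; right; left; omega
  · intro x hx; rw [hB_mem] at hx
    rcases hx with ⟨h1,h2⟩|⟨h1,h2⟩|h <;> omega
  · intro k h1 h2; rw [hB_mem]; right; left; omega
  · -- reconstruction
    ext x
    simp only [mem_union, mem_sdiff, mem_erase]
    have hrunx : x ∈ run ↔ (c+1 ≤ x ∧ x ≤ m) := by rw [hrunn, mem_Icc]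
    have hrx' : x ∈ run' ↔ (c ≤ x ∧ x ≤ m-1) := by rw [hrun', mem_Icc]
    rw [hrunx, hrx', hrest_mem, mem_singleton]
    constructor
    · rintro (⟨⟨hxr, hB⟩, h3⟩ | ⟨h1, h2⟩)
      · rcases hB with (⟨h1,h2⟩|⟨h1,h2⟩)|h
        · exact h1
        · omega
        · omega
      · exact hrun x (by omega) h2
    · intro hxS
      have h1 := hub x hxS
      have h2 := hlb x hxS
      by_cases hx2 : c + 1 ≤ x
      · right; exact ⟨hx2, h1⟩
      · left
        have hxc : x < c := by
          have : x ≠ c := fun h => hc (h ▸ hxS)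
          omega
        exact ⟨⟨by omega, Or.inl (Or.inl ⟨hxS, hxc⟩)⟩, by omega⟩
  · intro a b hab hE
    have h1 : m-c ∈ Icc a b := by rw [← hE, hB_mem]; tauto
    have h2 : m-1 ∈ Icc a b := by rw [← hE, hB_mem]; right; left; omega
    have hbmem : b ∈ Icc a b := mem_Icc.2 ⟨hab, le_rfl⟩
    have hamem : a ∈ Icc a b := mem_Icc.2 ⟨le_rfl, hab⟩
    rw [← hE, hB_mem] at hbmem hamem
    rw [mem_Icc] at h1 h2
    constructor
    · rcases hamem with ⟨h3,h4⟩|⟨h3,h4⟩|h3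
      · have := hlb a h3; omega
      · omega
      · omega
    · rcases hbmem with ⟨h3,h4⟩|⟨h3,h4⟩|h3
      · have := hub b h3
        have : b ≠ c := fun h => hc (h ▸ h3)
        omega
      · omega
      · omega
end MoveB
noncomputable section Franklin

/-- Distinct partitions of `n`, as finsets of positive integers summing to `n`. -/
def Dset (n : ℕ) : Finset (Finset ℕ) :=
  ((range (n+1)).powerset).filter (fun S => 0 ∉ S ∧ S.sum id = n)

lemma mem_Dset {n : ℕ} {S : Finset ℕ} : S ∈ Dset n ↔ (0 ∉ S ∧ S.sum id = n) := by
  rw [Dset, mem_filter, mem_powerset, and_iff_right_iff_imp]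
  rintro ⟨h0, hsum⟩ x hx
  have hx' : x ≤ S.sum id := single_le_sum (f := id) (fun i _ => Nat.zero_le i) hx
  rw [mem_range]
  omega

/-- Exceptional (pentagonal) distinct partitions. -/
def isExc (S : Finset ℕ) : Prop :=
  ∃ u : ℕ, S = Icc (u+1) (u+1+u) ∨ S = Icc (u+2) (u+2+u)

/-- Franklin's involution. -/
def frank (S : Finset ℕ) : Finset ℕ :=
  if h : S.Nonempty then
    let m := S.max' h
    let s := S.min' h
    let c := Nat.findGreatest (fun k => k ∉ S) m
    if s ≤ m - c then (S.erase s \ Icc (m-s+1) m) ∪ Icc (m-s+2) (m+1)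
    else (S \ Icc (c+1) m) ∪ Icc c (m-1) ∪ {m-c}
  else S

theorem frank_main {S : Finset ℕ} (h0 : 0 ∉ S) (hne : S.Nonempty) (hexc : ¬ isExc S) :
    0 ∉ frank S ∧ (frank S).sum id = S.sum id ∧ frank S ≠ S ∧ ¬ isExc (frank S) ∧
      frank (frank S) = S := by
  classical
  set m := S.max' hne with hm_def
  set s := S.min' hne with hs_def
  set c := Nat.findGreatest (fun k => k ∉ S) m with hc_def
  have hm : m ∈ S := S.max'_mem hne
  have hub : ∀ x ∈ S, x ≤ m := fun x hx => S.le_max' x hx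
  have hs : s ∈ S := S.min'_mem hne
  have hlb : ∀ x ∈ S, s ≤ x := fun x hx => S.min'_le x hx
  have hs1 : 1 ≤ s := Nat.pos_of_ne_zero (fun h => h0 (h ▸ hs))
  have hsm : s ≤ m := hub s hs
  have hcP : c ∉ S := Nat.findGreatest_spec (P := fun k => k ∉ S) (m := 0) (Nat.zero_le m) h0
  have hcle : c ≤ m := Nat.findGreatest_le m
  have hcm : c < m := lt_of_le_of_ne hcle (fun h => hcP (h ▸ hm))
  have hrun : ∀ k, c < k → k ≤ m → k ∈ S := by
    intro k h1 h2
    by_contra hk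
    exact absurd (Nat.le_findGreatest h2 hk) (not_lt.2 (le_refl c) ∘ fun h => absurd h1 (not_lt.2 h))
  have hscc : s ≤ c + 1 := hlb _ (hrun (c+1) (by omega) (by omega))
  have hSint : (∀ x, s ≤ x → x ≤ m → x ∈ S) → S = Icc s m := by
    intro hfull
    ext x
    rw [mem_Icc]
    exact ⟨fun hx => ⟨hlb x hx, hub x hx⟩, fun hx => hfull x hx.1 hx.2⟩
  by_cases hAB : s ≤ m - c
  · -- Case A
    have h2s : 2*s ≤ m := by
      by_contra h2s
      push_neg at h2s
      have hcs : c < s := by omega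
      have hsc1 : s = c + 1 := by omega
      have hSfull : S = Icc s m := hSint (fun x hx1 hx2 => hrun x (by omega) hx2)
      have hm2s : m = 2*s - 1 := by omega
      refine hexc ⟨s - 1, Or.inl ?_⟩
      rw [hSfull]
      congr 1 <;> omega
    obtain ⟨c1,c2,c3,c4,c5,c6,c7,c8,c9⟩ :=
      moveA S m s c h0 hm hub hs hlb hcP hcm hrun hAB h2s
    have hfrank : frank S = (S.erase s \ Icc (m-s+1) m) ∪ Icc (m-s+2) (m+1) := by
      rw [frank, dif_pos hne]
      simp only []
      rw [if_pos hAB]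
    rw [hfrank]
    set S' := (S.erase s \ Icc (m-s+1) m) ∪ Icc (m-s+2) (m+1) with hS'
    have hne' : S'.Nonempty := ⟨m+1, c3⟩
    refine ⟨c1, c2, ?_, ?_, ?_⟩
    · intro hEq
      have := hub (m+1) (hEq ▸ c3)
      omega
    · rintro ⟨u, hu | hu⟩
      · obtain ⟨ha, hb⟩ := c9 (u+1) (u+1+u) (by omega) hu
        omega
      · obtain ⟨ha, hb⟩ := c9 (u+2) (u+2+u) (by omega) hu
        omega
    · have hmax' : S'.max' hne' = m+1 := le_antisymm (max'_le _ _ _ (fun x hx => c4 x hx)) (le_max' _ _ c3)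
      have hmin' : s < S'.min' hne' := c5 _ (S'.min'_mem hne')
      have hcg : Nat.findGreatest (fun k => k ∉ S') (S'.max' hne') = m-s+1 := by
        rw [hmax']
        refine le_antisymm ?_ (Nat.le_findGreatest (by omega) c6)
        by_contra hgt
        push_neg at hgt
        have hspec : Nat.findGreatest (fun k => k ∉ S') (m+1) ∉ S' :=
          Nat.findGreatest_spec (P := fun k => k ∉ S') (m := m-s+1) (by omega) c6
        exact hspec (c7 _ hgt (Nat.findGreatest_le (m+1)))
      rw [frank, dif_pos hne']
      simp only []
      rw [hcg, hmax']
      rw [if_neg (by omega)]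
      have e1 : m - s + 1 + 1 = m - s + 2 := by omega
      have e2 : m + 1 - 1 = m := by omega
      have e3 : m + 1 - (m - s + 1) = s := by omega
      rw [e1, e2, e3]
      exact c8
  · -- Case B
    push_neg at hAB
    have hrc : m - c < c := by
      rcases Nat.lt_or_ge (m - c) c with h | h
      · exact h
      · exfalso
        have hceq : m - c = c := by omega
        have hsc1 : s = c + 1 := by omega
        have hSfull : S = Icc s m := hSint (fun x hx1 hx2 => hrun x (by omega) hx2)
        have hc1 : 1 ≤ c := by omega
        refine hexc ⟨c - 1, Or.inr ?_⟩
        rw [hSfull]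
        congr 1 <;> omega
    obtain ⟨d1,d2,d3,d4,d5,d6,d7,d8,d9⟩ :=
      moveB S m s c h0 hm hub hs hlb hcP hcm hrun hAB hrc
    have hfrank : frank S = (S \ Icc (c+1) m) ∪ Icc c (m-1) ∪ {m-c} := by
      rw [frank, dif_pos hne]
      simp only []
      rw [← hm_def, ← hc_def, ← hs_def]
      rw [if_neg (by omega)]
    rw [hfrank]
    set S' := (S \ Icc (c+1) m) ∪ Icc c (m-1) ∪ {m-c} with hS'
    have hne' : S'.Nonempty := ⟨m-c, d3⟩
    refine ⟨d1, d2, ?_, ?_, ?_⟩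
    · intro hEq
      have := hlb (m-c) (hEq ▸ d3)
      omega
    · rintro ⟨u, hu | hu⟩
      · obtain ⟨ha, hb⟩ := d9 (u+1) (u+1+u) (by omega) hu
        omega
      · obtain ⟨ha, hb⟩ := d9 (u+2) (u+2+u) (by omega) hu
        omega
    · have hmax' : S'.max' hne' = m-1 := le_antisymm (max'_le _ _ _ (fun x hx => d6 x hx)) (le_max' _ _ d5)
      have hmin' : S'.min' hne' = m-c := le_antisymm (min'_le _ _ d3) (le_min' _ _ _ (fun x hx => d4 x hx))
      have hcg : Nat.findGreatest (fun k => k ∉ S') (m-1) ≤ c - 1 := by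
        by_contra hgt
        push_neg at hgt
        have hspec : Nat.findGreatest (fun k => k ∉ S') (m-1) ∉ S' :=
          Nat.findGreatest_spec (P := fun k => k ∉ S') (m := 0) (Nat.zero_le _) d1
        exact hspec (d7 _ (by omega) (Nat.findGreatest_le (m-1)))
      rw [frank, dif_pos hne']
      simp only []
      rw [hmin', hmax']
      rw [if_pos (by omega)]
      set c' := Nat.findGreatest (fun k => k ∉ S') (m-1) with hc'_def
      have e1 : m - 1 - (m - c) + 1 = c := by omega
      have e2 : m - 1 - (m - c) + 2 = c + 1 := by omega
      have e3 : m - 1 + 1 = m := by omega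
      rw [e1, e2, e3]
      exact d8
end Franklin
section Parity
open scoped Classical

lemma pent_u1 {a b : ℕ} (h : (3*a+2)*(a+1) = (3*b+2)*(b+1)) : a = b := by
  rcases lt_trichotomy a b with hl | he | hl
  · nlinarith
  · exact he
  · nlinarith

lemma pent_u2 {a b : ℕ} (h : (3*a+4)*(a+1) = (3*b+4)*(b+1)) : a = b := by
  rcases lt_trichotomy a b with hl | he | hl
  · nlinarith
  · exact he
  · nlinarith

lemma pent_u3 {a b : ℕ} (h : (3*a+2)*(a+1) = (3*b+4)*(b+1)) : False := by
  rcases le_or_gt a b with h1 | h1 <;> nlinarith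

lemma exc_char {n : ℕ} {T : Finset ℕ} (hT : T.sum id = n) (he : isExc T) :
    ∃ u, (T = Icc (u+1) (u+1+u) ∧ 2*n = (3*u+2)*(u+1)) ∨
         (T = Icc (u+2) (u+2+u) ∧ 2*n = (3*u+4)*(u+1)) := by
  obtain ⟨u, h | h⟩ := he
  · refine ⟨u, Or.inl ⟨h, ?_⟩⟩
    have h2 : 2*(∑ x ∈ Icc (u+1) (u+1+u), x) = (2*(u+1)+u)*(u+1) := two_mul_sum_Icc _ _
    have h3 : T.sum id = ∑ x ∈ Icc (u+1) (u+1+u), x := by rw [h]; rfl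
    have h4 : (2*(u+1)+u)*(u+1) = (3*u+2)*(u+1) := by ring
    omega
  · refine ⟨u, Or.inr ⟨h, ?_⟩⟩
    have h2 : 2*(∑ x ∈ Icc (u+2) (u+2+u), x) = (2*(u+2)+u)*(u+1) := two_mul_sum_Icc _ _
    have h3 : T.sum id = ∑ x ∈ Icc (u+2) (u+2+u), x := by rw [h]; rfl
    have h4 : (2*(u+2)+u)*(u+1) = (3*u+4)*(u+1) := by ring
    omega

lemma exc_mem1 {n u : ℕ} (h : 2*n = (3*u+2)*(u+1)) : Icc (u+1) (u+1+u) ∈ Dset n := by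
  rw [mem_Dset]
  constructor
  · rw [mem_Icc]; omega
  · have h2 : 2*(∑ x ∈ Icc (u+1) (u+1+u), x) = (2*(u+1)+u)*(u+1) := two_mul_sum_Icc _ _
    have h4 : (2*(u+1)+u)*(u+1) = (3*u+2)*(u+1) := by ring
    show ∑ x ∈ Icc (u+1) (u+1+u), x = n
    omega

lemma exc_mem2 {n u : ℕ} (h : 2*n = (3*u+4)*(u+1)) : Icc (u+2) (u+2+u) ∈ Dset n := by
  rw [mem_Dset]
  constructor
  · rw [mem_Icc]; omega
  · have h2 : 2*(∑ x ∈ Icc (u+2) (u+2+u), x) = (2*(u+2)+u)*(u+1) := two_mul_sum_Icc _ _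
    have h4 : (2*(u+2)+u)*(u+1) = (3*u+4)*(u+1) := by ring
    show ∑ x ∈ Icc (u+2) (u+2+u), x = n
    omega

theorem franklin_parity (n : ℕ) :
    ((Dset n).card : ZMod 2) = if ∃ k : ℕ, k*k = 24*n+1 then 1 else 0 := by
  classical
  have hcast2 : ∀ t : ℕ, ((2*t : ℕ) : ZMod 2) = 0 := by
    intro t
    push_cast
    rw [show ((2 : ZMod 2)) = 0 from rfl]
    ring
  rcases Nat.eq_zero_or_pos n with rfl | hn
  · have h1 : Dset 0 = {∅} := by
      ext S
      rw [mem_Dset, mem_singleton]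
      constructor
      · rintro ⟨h0, hsum⟩
        by_contra hne
        obtain ⟨x, hx⟩ := Finset.nonempty_iff_ne_empty.2 hne
        have hx1 : x ≠ 0 := fun h => h0 (h ▸ hx)
        have hxs : x ≤ S.sum id := single_le_sum (f := id) (fun i _ => Nat.zero_le i) hx
        omega
      · rintro rfl
        exact ⟨by simp, by simp⟩
    rw [h1, if_pos ⟨1, rfl⟩]
    simp
  · have hsplit := card_filter_add_card_filter_not (s := Dset n) (p := isExc)
    have heven : Even ((Dset n).filter (fun S => ¬ isExc S)).card := by
      apply even_card_of_invol _ frank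
      · intro S hS
        rw [mem_filter, mem_Dset] at hS
        obtain ⟨⟨h0, hsum⟩, hexcS⟩ := hS
        have hne : S.Nonempty := by
          rcases S.eq_empty_or_nonempty with rfl | h
          · simp at hsum; omega
          · exact h
        obtain ⟨f1, f2, f3, f4, f5⟩ := frank_main h0 hne hexcS
        rw [mem_filter, mem_Dset]
        exact ⟨⟨f1, by rw [f2, hsum]⟩, f4⟩
      · intro S hS
        rw [mem_filter, mem_Dset] at hS
        obtain ⟨⟨h0, hsum⟩, hexcS⟩ := hS
        have hne : S.Nonempty := by
          rcases S.eq_empty_or_nonempty with rfl | h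
          · simp at hsum; omega
          · exact h
        exact (frank_main h0 hne hexcS).2.2.2.2
      · intro S hS
        rw [mem_filter, mem_Dset] at hS
        obtain ⟨⟨h0, hsum⟩, hexcS⟩ := hS
        have hne : S.Nonempty := by
          rcases S.eq_empty_or_nonempty with rfl | h
          · simp at hsum; omega
          · exact h
        exact (frank_main h0 hne hexcS).2.2.1
    have hexc_card : ((Dset n).filter isExc).card = if ∃ k : ℕ, k*k = 24*n+1 then 1 else 0 := by
      split_ifs with hpent
      · obtain ⟨k, hk⟩ := hpent
        have hk2 : k % 2 = 1 := by
          by_contra h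
          obtain ⟨a, rfl⟩ : ∃ a, k = 2*a := ⟨k/2, by omega⟩
          have h4 : (2*a)*(2*a) = 4*(a*a) := by ring
          omega
        have hk3 : k % 3 ≠ 0 := by
          intro h
          obtain ⟨a, rfl⟩ : ∃ a, k = 3*a := ⟨k/3, by omega⟩
          have h9 : (3*a)*(3*a) = 9*(a*a) := by ring
          omega
        have hk6 : k % 6 = 1 ∨ k % 6 = 5 := by omega
        -- in each case we produce `u` with 2n of form1 or form2 and show the filter is a singleton
        rcases hk6 with h6 | h6
        · -- k = 6t+1 : form2 with u = t-1
          obtain ⟨t, rfl⟩ : ∃ t, k = 6*t+1 := ⟨k/6, by omega⟩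
          have hsq : (6*t+1)*(6*t+1) = 36*(t*t)+12*t+1 := by ring
          have ht1 : 1 ≤ t := by
            rcases Nat.eq_zero_or_pos t with rfl | h
            · omega
            · exact h
          obtain ⟨u, rfl⟩ : ∃ u, t = u+1 := ⟨t-1, by omega⟩
          have hform : 2*n = (3*u+4)*(u+1) := by
            have : (3*u+4)*(u+1) = 3*((u+1)*(u+1))+(u+1) := by ring
            have h36 : 36*((u+1)*(u+1)) = 36*((u+1)*(u+1)) := rfl
            nlinarith [hk, hsq]
          have : (Dset n).filter isExc = {Icc (u+2) (u+2+u)} := by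
            ext T
            rw [mem_filter, mem_singleton]
            constructor
            · rintro ⟨hTD, hTe⟩
              rw [mem_Dset] at hTD
              obtain ⟨u', hc | hc⟩ := exc_char hTD.2 hTe
              · exact absurd (hc.2.symm.trans hform) (fun h => pent_u3 h)
              · rw [hc.1, pent_u2 (hc.2.symm.trans hform)]
            · rintro rfl
              exact ⟨exc_mem2 hform, ⟨u, Or.inr rfl⟩⟩
          rw [this, card_singleton]
        · -- k = 6t+5 : form1 with u = t
          obtain ⟨t, rfl⟩ : ∃ t, k = 6*t+5 := ⟨k/6, by omega⟩
          have hsq : (6*t+5)*(6*t+5) = 36*(t*t)+60*t+25 := by ring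
          have hform : 2*n = (3*t+2)*(t+1) := by
            have : (3*t+2)*(t+1) = 3*(t*t)+5*t+2 := by ring
            omega
          have : (Dset n).filter isExc = {Icc (t+1) (t+1+t)} := by
            ext T
            rw [mem_filter, mem_singleton]
            constructor
            · rintro ⟨hTD, hTe⟩
              rw [mem_Dset] at hTD
              obtain ⟨u', hc | hc⟩ := exc_char hTD.2 hTe
              · rw [hc.1, pent_u1 (hc.2.symm.trans hform)]
              · exact absurd (hform.symm.trans hc.2) (fun h => pent_u3 h)
            · rintro rfl
              exact ⟨exc_mem1 hform, ⟨t, Or.inl rfl⟩⟩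
          rw [this, card_singleton]
      · rw [Finset.card_eq_zero, Finset.filter_eq_empty_iff]
        intro T hTD hTe
        rw [mem_Dset] at hTD
        obtain ⟨u, hc | hc⟩ := exc_char hTD.2 hTe
        · refine hpent ⟨6*u+5, ?_⟩
          have h1 : (6*u+5)*(6*u+5) = 12*((3*u+2)*(u+1))+1 := by ring
          omega
        · refine hpent ⟨6*u+7, ?_⟩
          have h1 : (6*u+7)*(6*u+7) = 12*((3*u+4)*(u+1))+1 := by ring
          omega
    have : (Dset n).card = ((Dset n).filter isExc).card + ((Dset n).filter (fun S => ¬ isExc S)).card := hsplit.symm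
    rw [this, hexc_card]
    obtain ⟨t, ht⟩ := heven
    rw [ht, show t + t = 2*t by ring]
    push_cast [hcast2]
    split_ifs <;> simp
end Parity
section PS
open scoped Classical
open PowerSeries

noncomputable def qpR (R : Type*) [CommRing R] (a c : ℕ) : PowerSeries R :=
  PowerSeries.mk fun n =>
    PowerSeries.coeff n
      (∏ i ∈ Finset.range (n + 1), (1 - (PowerSeries.X : PowerSeries R) ^ (a + c * i)))

lemma map_qpR {R S : Type*} [CommRing R] [CommRing S] (φ : R →+* S) (a c : ℕ) :
    PowerSeries.map φ (qpR R a c) = qpR S a c := by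
  ext n
  rw [PowerSeries.coeff_map, qpR, qpR, coeff_mk, coeff_mk, ← PowerSeries.coeff_map]
  congr 1
  rw [map_prod]
  apply Finset.prod_congr rfl
  intro i _
  rw [map_sub, map_one, map_pow, PowerSeries.map_X]

lemma map_inj_ps {R S : Type*} [CommRing R] [CommRing S] (φ : R →+* S)
    (hφ : Function.Injective φ) : Function.Injective (PowerSeries.map φ) := by
  intro p q h
  ext n
  apply hφ
  rw [← PowerSeries.coeff_map, ← PowerSeries.coeff_map, h]

lemma constantCoeff_qpR {R : Type*} [CommRing R] (a c : ℕ) (ha : 1 ≤ a) :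
    PowerSeries.constantCoeff (qpR R a c) = 1 := by
  have h0 : PowerSeries.constantCoeff (qpR R a c) = PowerSeries.coeff 0 (qpR R a c) := by
    rw [PowerSeries.coeff_zero_eq_constantCoeff]
  rw [h0, qpR, coeff_mk, PowerSeries.coeff_zero_eq_constantCoeff, map_prod]
  apply Finset.prod_eq_one
  intro i _
  rw [map_sub, map_one, map_pow, PowerSeries.constantCoeff_X, zero_pow (by omega), sub_zero]

def Dc (d v : ℕ) : ℕ :=
  (((Finset.range (v+1)).powerset).filter (fun S => ∑ i ∈ S, d * (i+1) = v)).card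

lemma coeff_qpR_two (d n : ℕ) (hd : 1 ≤ d) :
    PowerSeries.coeff n (qpR (ZMod 2) d d) = (Dc d n : ZMod 2) := by
  rw [qpR, coeff_mk]
  have hfac : ∀ i : ℕ, (1 - (X : PowerSeries (ZMod 2)) ^ (d + d*i)) = X^(d+d*i) + 1 := by
    intro i
    have h2 : (X^(d+d*i) : PowerSeries (ZMod 2)) + X^(d+d*i) = 0 := by
      ext k
      rw [map_add, map_zero]
      exact CharTwo.add_self_eq_zero _
    have hneg : -(X^(d+d*i) : PowerSeries (ZMod 2)) = X^(d+d*i) := neg_eq_of_add_eq_zero_left h2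
    rw [sub_eq_add_neg, hneg, add_comm]
  rw [Finset.prod_congr rfl (fun i _ => hfac i), Finset.prod_add, map_sum]
  have hterm : ∀ t ∈ (Finset.range (n+1)).powerset,
      PowerSeries.coeff n ((∏ i ∈ t, (X:PowerSeries (ZMod 2))^(d+d*i)) *
        ∏ i ∈ (Finset.range (n+1)) \ t, (1:PowerSeries (ZMod 2)))
      = if (∑ i ∈ t, d*(i+1)) = n then 1 else 0 := by
    intro t _
    rw [Finset.prod_const_one, mul_one, Finset.prod_pow_eq_pow_sum, PowerSeries.coeff_X_pow]
    have hsum : ∑ i ∈ t, (d + d*i) = ∑ i ∈ t, d*(i+1) :=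
      Finset.sum_congr rfl (fun i _ => by ring)
    rw [hsum]
    exact if_congr eq_comm rfl rfl
  rw [Finset.sum_congr rfl hterm, Finset.sum_boole]
  rfl

lemma filter_stable (d v M N : ℕ) (hd : 1 ≤ d) (hv : v < M) (hMN : M ≤ N) :
    ((Finset.range N).powerset).filter (fun S => ∑ i ∈ S, d * (i+1) = v) =
    ((Finset.range M).powerset).filter (fun S => ∑ i ∈ S, d * (i+1) = v) := by
  ext S
  simp only [Finset.mem_filter, Finset.mem_powerset]
  constructor
  · rintro ⟨hsub, hsum⟩
    refine ⟨?_, hsum⟩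
    intro x hx
    have h1 : d*(x+1) ≤ ∑ i ∈ S, d*(i+1) :=
      Finset.single_le_sum (f := fun i => d*(i+1)) (fun i _ => Nat.zero_le _) hx
    have h2 : x + 1 ≤ d*(x+1) := Nat.le_mul_of_pos_left _ hd
    rw [Finset.mem_range]
    omega
  · rintro ⟨hsub, hsum⟩
    exact ⟨hsub.trans (Finset.range_subset_range.mpr hMN), hsum⟩

lemma Dc_dvd (d v : ℕ) (hd : 1 ≤ d) : Dc d v = if d ∣ v then Dc 1 (v/d) else 0 := by
  split_ifs with h
  · obtain ⟨g, rfl⟩ := h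
    rw [Dc, Dc, Nat.mul_div_cancel_left g (by omega)]
    have hcond : ∀ S : Finset ℕ, (∑ i ∈ S, d*(i+1) = d*g) ↔ (∑ i ∈ S, 1*(i+1) = g) := by
      intro S
      rw [← Finset.mul_sum]
      constructor
      · intro hh
        have := Nat.eq_of_mul_eq_mul_left (show 0 < d by omega) hh
        simpa [one_mul] using this
      · intro hh
        simp only [one_mul] at hh
        rw [hh]
    have e1 : ((Finset.range (d*g+1)).powerset).filter (fun S => ∑ i ∈ S, d * (i+1) = d*g) =
        ((Finset.range (d*g+1)).powerset).filter (fun S => ∑ i ∈ S, 1 * (i+1) = g) :=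
      Finset.filter_congr (fun S _ => by rw [hcond S])
    rw [e1, filter_stable 1 g (g+1) (d*g+1) le_rfl (by omega)
      (by have : g ≤ d*g := Nat.le_mul_of_pos_left _ (by omega); omega)]
  · rw [Dc, Finset.card_eq_zero, Finset.filter_eq_empty_iff]
    intro S _
    intro hsum
    exact h ⟨∑ i ∈ S, (i+1), by rw [← hsum, Finset.mul_sum]⟩

lemma coeff_sq (f : PowerSeries (ZMod 2)) (n : ℕ) :
    PowerSeries.coeff n (f^2)
      = if 2 ∣ n then PowerSeries.coeff (n/2) f else 0 := by
  have hswap_mem : ∀ (m : ℕ) (p : ℕ × ℕ), p ∈ Finset.HasAntidiagonal.antidiagonal m → p.swap ∈ Finset.HasAntidiagonal.antidiagonal m := by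
    intro m p hp
    rw [Finset.HasAntidiagonal.mem_antidiagonal] at hp ⊢
    simp [Prod.swap]
    omega
  rw [sq, PowerSeries.coeff_mul]
  by_cases h2 : 2 ∣ n
  · obtain ⟨k, rfl⟩ := h2
    have hkk : ((k, k) : ℕ × ℕ) ∈ Finset.HasAntidiagonal.antidiagonal (2*k) := by
      rw [Finset.HasAntidiagonal.mem_antidiagonal]; omega
    rw [← Finset.add_sum_erase _ _ hkk]
    have hzero : ∑ p ∈ (Finset.HasAntidiagonal.antidiagonal (2*k)).erase (k,k),
        PowerSeries.coeff p.1 f * PowerSeries.coeff p.2 f = 0 := by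
      apply Finset.sum_involution (fun p _ => Prod.swap p)
      · intro p _
        rw [mul_comm]
        exact CharTwo.add_self_eq_zero _
      · intro p hp _
        intro hsw
        obtain ⟨hne, hmem⟩ := Finset.mem_erase.1 hp
        rw [Finset.HasAntidiagonal.mem_antidiagonal] at hmem
        apply hne
        have h1 : p.2 = p.1 := congrArg Prod.fst hsw
        have : p.1 = k := by omega
        have : p.2 = k := by omega
        ext <;> omega
      · intro p hp
        obtain ⟨hne, hmem⟩ := Finset.mem_erase.1 hp
        refine Finset.mem_erase.2 ⟨?_, hswap_mem _ _ hmem⟩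
        intro hsw
        apply hne
        rw [Finset.HasAntidiagonal.mem_antidiagonal] at hmem
        have h1 : p.2 = k := congrArg Prod.fst hsw
        have h2 : p.1 = k := congrArg Prod.snd hsw
        ext <;> omega
      · intro p _
        exact Prod.swap_swap p
    rw [hzero, add_zero, if_pos ⟨k, rfl⟩, Nat.mul_div_cancel_left k (by norm_num)]
    have hx : ∀ x : ZMod 2, x * x = x := by decide
    exact hx _
  · rw [if_neg h2]
    apply Finset.sum_involution (fun p _ => Prod.swap p)
    · intro p _
      rw [mul_comm]
      exact CharTwo.add_self_eq_zero _
    · intro p hp _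
      intro hsw
      rw [Finset.HasAntidiagonal.mem_antidiagonal] at hp
      have h1 : p.2 = p.1 := congrArg Prod.fst hsw
      exact h2 ⟨p.1, by omega⟩
    · intro p hp
      exact hswap_mem _ _ hp
    · intro p _
      exact Prod.swap_swap p

lemma qpR_sq (a : ℕ) (ha : 1 ≤ a) :
    (qpR (ZMod 2) a a)^2 = qpR (ZMod 2) (2*a) (2*a) := by
  ext n
  rw [coeff_sq, coeff_qpR_two (2*a) n (by omega), Dc_dvd (2*a) n (by omega)]
  by_cases h2 : 2 ∣ n
  · rw [if_pos h2, coeff_qpR_two a _ ha, Dc_dvd a _ ha]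
    by_cases hA : a ∣ n/2
    · have h2a : 2*a ∣ n := by
        obtain ⟨k, rfl⟩ := h2
        obtain ⟨j, hj⟩ := hA
        rw [Nat.mul_div_cancel_left k (by norm_num)] at hj
        exact ⟨j, by rw [hj]; ring⟩
      rw [if_pos hA, if_pos h2a, Nat.div_div_eq_div_mul]
    · have hno : ¬ (2*a ∣ n) := by
        intro hdvd
        apply hA
        obtain ⟨j, rfl⟩ := hdvd
        refine ⟨j, ?_⟩
        rw [show 2*a*j = 2*(a*j) by ring, Nat.mul_div_cancel_left _ (by norm_num)]
      rw [if_neg hA, if_neg hno]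
  · rw [if_neg h2, if_neg (fun h => h2 (dvd_trans ⟨a, rfl⟩ h))]
    push_cast
    rfl

lemma Dc_one (g : ℕ) : Dc 1 g = (Dset g).card := by
  rw [Dc]
  apply Finset.card_bij (fun S _ => Finset.image (· + 1) S)
  · intro S hS
    rw [Finset.mem_filter, Finset.mem_powerset] at hS
    obtain ⟨hsub, hsum⟩ := hS
    simp only [one_mul] at hsum
    have hsum2 : (Finset.image (· + 1) S).sum id = g := by
      rw [Finset.sum_image (by intro x _ y _ h; simpa using h)]
      simpa [id_eq] using hsum
    rw [mem_Dset]
    constructor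
    · rw [Finset.mem_image]
      rintro ⟨a, _, ha⟩
      exact Nat.succ_ne_zero a ha
    · exact hsum2
  · intro S1 h1 S2 h2 heq
    have : Function.Injective (· + 1 : ℕ → ℕ) := fun x y h => by simpa using h
    exact Finset.image_injective this heq
  · intro T hT
    rw [mem_Dset] at hT
    obtain ⟨h0, hsum⟩ := hT
    refine ⟨Finset.image (· - 1) T, ?_, ?_⟩
    · have hTim : Finset.image (· + 1) (Finset.image (· - 1) T) = T := by
        ext x
        simp only [Finset.mem_image]
        constructor
        · rintro ⟨a, ⟨b, hb, rfl⟩, rfl⟩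
          have hb1 : b ≠ 0 := fun h => h0 (h ▸ hb)
          have : b - 1 + 1 = b := by omega
          rw [this]
          exact hb
        · intro hx
          have hx1 : x ≠ 0 := fun h => h0 (h ▸ hx)
          exact ⟨x - 1, ⟨x, hx, rfl⟩, by show x - 1 + 1 = x; omega⟩
      rw [Finset.mem_filter, Finset.mem_powerset]
      constructor
      · intro y hy
        rw [Finset.mem_image] at hy
        obtain ⟨b, hb, rfl⟩ := hy
        have hble : b ≤ T.sum id := Finset.single_le_sum (f := id) (fun i _ => Nat.zero_le i) hb
        rw [Finset.mem_range]
        omega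
      · have hinj : ∀ x ∈ Finset.image (· - 1) T, ∀ y ∈ Finset.image (· - 1) T,
            x + 1 = y + 1 → x = y := by intro x _ y _ h; omega
        have hsi : ∑ x ∈ Finset.image (· + 1 : ℕ → ℕ) (Finset.image (· - 1) T), id x
            = ∑ x ∈ Finset.image (· - 1) T, id (x + 1) := Finset.sum_image hinj
        rw [hTim] at hsi
        calc ∑ i ∈ Finset.image (· - 1) T, 1 * (i + 1)
            = ∑ i ∈ Finset.image (· - 1) T, id (i + 1) := by
              apply Finset.sum_congr rfl; intro i _; simp
          _ = ∑ i ∈ T, id i := hsi.symm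
          _ = g := hsum
    · have hTim : Finset.image (· + 1) (Finset.image (· - 1) T) = T := by
        ext x
        simp only [Finset.mem_image]
        constructor
        · rintro ⟨a, ⟨b, hb, rfl⟩, rfl⟩
          have hb1 : b ≠ 0 := fun h => h0 (h ▸ hb)
          have : b - 1 + 1 = b := by omega
          rw [this]
          exact hb
        · intro hx
          have hx1 : x ≠ 0 := fun h => h0 (h ▸ hx)
          exact ⟨x - 1, ⟨x, hx, rfl⟩, by show x - 1 + 1 = x; omega⟩
      exact hTim

lemma coeff_qp8 (N : ℕ) :
    PowerSeries.coeff N (qpR (ZMod 2) 8 8)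
      = if (8 ∣ N ∧ ∃ k : ℕ, k*k = 3*N+1) then 1 else 0 := by
  classical
  rw [coeff_qpR_two 8 N (by norm_num), Dc_dvd 8 N (by norm_num)]
  by_cases h8 : 8 ∣ N
  · rw [if_pos h8, Dc_one, franklin_parity (N/8)]
    have h24 : 24 * (N/8) = 3 * N := by
      obtain ⟨g, rfl⟩ := h8
      rw [Nat.mul_div_cancel_left g (by norm_num)]
      ring
    rw [h24]
    by_cases hk : ∃ k : ℕ, k*k = 3*N+1
    · rw [if_pos hk, if_pos ⟨h8, hk⟩]
    · rw [if_neg hk, if_neg (fun h => hk h.2)]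
  · rw [if_neg h8, if_neg (fun h => h8 h.1)]
    push_cast
    rfl
end PS
open PowerSeries in
/-- For a prime `p ≥ 5` with `p ≡ 2 (mod 3)`:
`EObar(p²n + (p²-1)/3) ≡ EObar(n) (mod 2)`. -/
theorem EObar_mod_two_invariance (EObar : ℕ → ℕ)
    (hEO : PowerSeries.mk (fun n => (EObar n : ℚ)) = qp 4 4 ^ 3 * (qp 2 2 ^ 2)⁻¹)
    (p : ℕ) (hp : p.Prime) (hp5 : 5 ≤ p) (hp3 : p % 3 = 2) (n : ℕ) :
    EObar (p ^ 2 * n + (p ^ 2 - 1) / 3) % 2 = EObar n % 2 := by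
  classical
  have hqp : qp = qpR ℚ := rfl
  have hconst : PowerSeries.constantCoeff (qp 2 2 ^ 2) ≠ 0 := by
    rw [map_pow, hqp, constantCoeff_qpR 2 2 (by norm_num)]
    norm_num
  have hQ : PowerSeries.mk (fun n => (EObar n : ℚ)) * qp 2 2 ^ 2 = qp 4 4 ^ 3 := by
    rw [hEO, mul_assoc, PowerSeries.inv_mul_cancel _ hconst, mul_one]
  rw [hqp] at hQ
  have hZ : PowerSeries.mk (fun n => (EObar n : ℤ)) * qpR ℤ 2 2 ^ 2 = qpR ℤ 4 4 ^ 3 := by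
    apply map_inj_ps (Int.castRingHom ℚ) (fun a b h => by simpa using h)
    rw [map_mul, map_pow, map_pow, map_qpR, map_qpR]
    have hmk : PowerSeries.map (Int.castRingHom ℚ) (PowerSeries.mk (fun n => (EObar n : ℤ)))
        = PowerSeries.mk (fun n => (EObar n : ℚ)) := by
      ext m
      rw [PowerSeries.coeff_map, coeff_mk, coeff_mk]
      push_cast
      rfl
    rw [hmk]
    exact hQ
  have hM : PowerSeries.mk (fun n => (EObar n : ZMod 2)) * qpR (ZMod 2) 2 2 ^ 2
      = qpR (ZMod 2) 4 4 ^ 3 := by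
    have hmap := congrArg (PowerSeries.map (Int.castRingHom (ZMod 2))) hZ
    rw [map_mul, map_pow, map_pow, map_qpR, map_qpR] at hmap
    have hmk : PowerSeries.map (Int.castRingHom (ZMod 2))
        (PowerSeries.mk (fun n => (EObar n : ℤ)))
        = PowerSeries.mk (fun n => (EObar n : ZMod 2)) := by
      ext m
      rw [PowerSeries.coeff_map, coeff_mk, coeff_mk]
      push_cast
      rfl
    rwa [hmk] at hmap
  have hB2 : qpR (ZMod 2) 2 2 ≠ 0 := by
    intro h
    have hco := constantCoeff_qpR (R := ZMod 2) 2 2 (by norm_num)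
    rw [h, map_zero] at hco
    exact zero_ne_one hco
  have h44 : qpR (ZMod 2) 2 2 ^ 2 = qpR (ZMod 2) 4 4 := by
    have := qpR_sq 2 (by norm_num)
    rwa [show 2*2 = 4 from rfl] at this
  have h88 : qpR (ZMod 2) 4 4 ^ 2 = qpR (ZMod 2) 8 8 := by
    have := qpR_sq 4 (by norm_num)
    rwa [show 2*4 = 8 from rfl] at this
  have hE8 : PowerSeries.mk (fun n => (EObar n : ZMod 2)) = qpR (ZMod 2) 8 8 := by
    have hc : PowerSeries.mk (fun n => (EObar n : ZMod 2)) * qpR (ZMod 2) 2 2 ^ 2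
        = (qpR (ZMod 2) 8 8) * qpR (ZMod 2) 2 2 ^ 2 := by
      rw [hM, ← h88, ← h44]
      ring
    exact mul_right_cancel₀ (pow_ne_zero 2 hB2) hc
  have hcoeff : ∀ N : ℕ, (EObar N : ZMod 2)
      = if (8 ∣ N ∧ ∃ k : ℕ, k*k = 3*N+1) then 1 else 0 := by
    intro N
    rw [← coeff_qp8 N, ← hE8, coeff_mk]
  -- arithmetic endgame
  have hp2 : p % 2 = 1 := by
    rcases Nat.mod_two_eq_zero_or_one p with h | h
    · exfalso
      have h2 : 2 ∣ p := Nat.dvd_of_mod_eq_zero h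
      have := (Nat.prime_dvd_prime_iff_eq Nat.prime_two hp).1 h2
      omega
    · exact h
  have hsq8 : p^2 % 8 = 1 := by
    obtain ⟨k, hk⟩ : ∃ k, p = 2*k+1 := ⟨p/2, by omega⟩
    have hpe : p^2 = 4*(k*(k+1)) + 1 := by rw [hk]; ring
    obtain ⟨j, hj⟩ := Nat.even_mul_succ_self k
    omega
  have hsq3 : p^2 % 3 = 1 := by
    obtain ⟨k, hk⟩ : ∃ k, p = 3*k+2 := ⟨p/3, by omega⟩
    have hpe : p^2 = 3*(3*k*k+4*k+1) + 1 := by rw [hk]; ring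
    omega
  obtain ⟨t, ht⟩ : ∃ t, p^2 = 24*t+1 := ⟨p^2/24, by omega⟩
  have hdelta : (p^2-1)/3 = 8*t := by omega
  set N' := p^2*n + (p^2-1)/3 with hN'
  have hN'8 : (8 ∣ N') ↔ (8 ∣ n) := by
    rw [hN', hdelta, ht]
    have he : (24*t+1)*n + 8*t = 8*(3*(t*n)+t) + n := by ring
    rw [he]
    omega
  have h3N' : 3*N' + 1 = p^2*(3*n+1) := by
    rw [hN', hdelta, ht]
    ring
  have hsqiff : (∃ k : ℕ, k*k = 3*N'+1) ↔ (∃ k : ℕ, k*k = 3*n+1) := by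
    rw [h3N']
    constructor
    · rintro ⟨k, hk⟩
      have hpk : p ∣ k := by
        apply hp.dvd_of_dvd_pow (n := 2)
        rw [sq, hk]
        exact ⟨p*(3*n+1), by ring⟩
      obtain ⟨j, rfl⟩ := hpk
      refine ⟨j, ?_⟩
      have h2 : p^2*(j*j) = p^2*(3*n+1) := by rw [← hk]; ring
      exact Nat.eq_of_mul_eq_mul_left (by positivity) h2
    · rintro ⟨k, hk⟩
      exact ⟨p*k, by rw [show (p*k)*(p*k) = p^2*(k*k) by ring, hk]⟩
  have hfinal : (EObar N' : ZMod 2) = (EObar n : ZMod 2) := by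
    rw [hcoeff, hcoeff]
    exact if_congr (and_congr hN'8 hsqiff) rfl rfl
  exact (ZMod.natCast_eq_natCast_iff _ _ _).1 hfinal
end

section
/- Let p ≥ 5 be a prime with p ≡ 2 (mod 3). Then for all nonnegative integers n and all integers j with p ∤ j, EO-bar(p^2 n + (p^2-1)/3 + pj) ≡ 0 (mod 2). -/
open PowerSeries

open Finset

noncomputable def qpG (R : Type*) [CommRing R] (a c : ℕ) : PowerSeries R :=
  PowerSeries.mk fun n =>
    PowerSeries.coeff n
      (∏ i ∈ Finset.range (n + 1), (1 - (PowerSeries.X : PowerSeries R) ^ (a + c * i)))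

section QpG
variable {R : Type*} [CommRing R]

theorem xpow_dvd_prod_sub_one {n : ℕ} {f : ℕ → PowerSeries R} (s : Finset ℕ)
    (h : ∀ i ∈ s, (X : PowerSeries R) ^ n ∣ (f i - 1)) :
    (X : PowerSeries R) ^ n ∣ (∏ i ∈ s, f i) - 1 := by
  classical
  induction s using Finset.induction_on with
  | empty => simp
  | @insert j s' hjs ih =>
    rw [Finset.prod_insert hjs]
    have h1 := h j (Finset.mem_insert_self _ _)
    have h2 := ih (fun i hi => h i (Finset.mem_insert_of_mem hi))
    have heq : f j * ∏ i ∈ s', f i - 1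
        = (f j - 1) * (∏ i ∈ s', f i) + ((∏ i ∈ s', f i) - 1) := by ring
    rw [heq]
    exact dvd_add (h1.mul_right _) h2

theorem coeff_prod_stable {a c : ℕ} (ha : 1 ≤ a) (hc : 1 ≤ c) {n m₁ m₂ : ℕ}
    (h1 : n < m₁) (h2 : m₁ ≤ m₂) :
    PowerSeries.coeff n (∏ i ∈ Finset.range m₁, (1 - (X : PowerSeries R) ^ (a + c * i)))
      = PowerSeries.coeff n (∏ i ∈ Finset.range m₂, (1 - (X : PowerSeries R) ^ (a + c * i))) := by
  rw [← Finset.prod_range_mul_prod_Ico _ h2]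
  have hdvd : (X : PowerSeries R) ^ (n + 1) ∣
      (∏ i ∈ Finset.Ico m₁ m₂, (1 - (X : PowerSeries R) ^ (a + c * i))) - 1 := by
    apply xpow_dvd_prod_sub_one
    intro i hi
    have hi1 : m₁ ≤ i := (Finset.mem_Ico.mp hi).1
    have hle : n + 1 ≤ a + c * i := by nlinarith
    have h3 : (1 : PowerSeries R) - X ^ (a + c * i) - 1 = -(X ^ (a + c * i)) := by ring
    rw [h3]
    exact dvd_neg.mpr (pow_dvd_pow X hle)
  obtain ⟨g, hg⟩ := hdvd
  have heq : (∏ i ∈ Finset.Ico m₁ m₂, (1 - (X : PowerSeries R) ^ (a + c * i)))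
      = 1 + X ^ (n+1) * g := by linear_combination hg
  rw [heq, mul_add, mul_one, map_add]
  have h0 : PowerSeries.coeff n
      ((∏ i ∈ Finset.range m₁, (1 - (X : PowerSeries R) ^ (a + c * i))) * (X ^ (n+1) * g)) = 0 := by
    have hdvd2 : (X : PowerSeries R) ^ (n+1) ∣
        (∏ i ∈ Finset.range m₁, (1 - (X : PowerSeries R) ^ (a + c * i))) * (X ^ (n+1) * g) :=
      ⟨(∏ i ∈ Finset.range m₁, (1 - (X : PowerSeries R) ^ (a + c * i))) * g, by ring⟩
    exact PowerSeries.X_pow_dvd_iff.mp hdvd2 n (Nat.lt_succ_self n)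
  rw [h0, add_zero]

theorem coeff_qpG {a c : ℕ} (ha : 1 ≤ a) (hc : 1 ≤ c) {n m : ℕ} (h : n < m) :
    PowerSeries.coeff n (qpG R a c)
      = PowerSeries.coeff n (∏ i ∈ Finset.range m, (1 - (X : PowerSeries R) ^ (a + c * i))) := by
  rw [qpG, PowerSeries.coeff_mk]
  exact coeff_prod_stable ha hc (Nat.lt_succ_self n) h

theorem xpow_dvd_qpG_sub {a c : ℕ} (ha : 1 ≤ a) (hc : 1 ≤ c) (n : ℕ) :
    (X : PowerSeries R) ^ (n + 1) ∣
      qpG R a c - ∏ i ∈ Finset.range (n + 1), (1 - (X : PowerSeries R) ^ (a + c * i)) := by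
  rw [PowerSeries.X_pow_dvd_iff]
  intro m hm
  rw [map_sub, coeff_qpG ha hc (show m < n+1 from hm), sub_self]

theorem constantCoeff_qpG {a c : ℕ} (ha : 1 ≤ a) : constantCoeff (qpG R a c) = 1 := by
  rw [← PowerSeries.coeff_zero_eq_constantCoeff_apply, qpG, PowerSeries.coeff_mk]
  rw [Finset.range_one, Finset.prod_singleton, map_sub, PowerSeries.coeff_zero_one, PowerSeries.coeff_X_pow,
    if_neg (by omega)]
  ring

theorem map_qpG {R' : Type*} [CommRing R'] (f : R →+* R') (a c : ℕ) :
    PowerSeries.map f (qpG R a c) = qpG R' a c := by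
  ext n
  rw [PowerSeries.coeff_map, qpG, qpG, PowerSeries.coeff_mk, PowerSeries.coeff_mk,
    ← PowerSeries.coeff_map]
  congr 1
  rw [map_prod]
  apply Finset.prod_congr rfl
  intro i _
  rw [map_sub, map_one, map_pow, PowerSeries.map_X]

theorem map_PS_injective {R' : Type*} [CommRing R'] {f : R →+* R'} (hf : Function.Injective f) :
    Function.Injective (PowerSeries.map f) := by
  intro x y h
  ext n
  apply hf
  rw [← PowerSeries.coeff_map, ← PowerSeries.coeff_map, h]

end QpG

theorem two_eq_zero_PS : (2 : (ZMod 2)⟦X⟧) = 0 := by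
  have h : PowerSeries.C (2 : ZMod 2) = (2 : (ZMod 2)⟦X⟧) := map_ofNat _ 2
  rw [← h, show (2 : ZMod 2) = 0 by decide, map_zero]

theorem sq_one_sub_xpow (e : ℕ) :
    ((1 : (ZMod 2)⟦X⟧) - X ^ e) ^ 2 = 1 - X ^ (2 * e) := by
  linear_combination (X ^ (2*e) - X ^ e : (ZMod 2)⟦X⟧) * two_eq_zero_PS

theorem qpG_sq {a c : ℕ} (ha : 1 ≤ a) (hc : 1 ≤ c) :
    (qpG (ZMod 2) a c) ^ 2 = qpG (ZMod 2) (2*a) (2*c) := by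
  ext n
  obtain ⟨d, hd⟩ := xpow_dvd_qpG_sub (R := ZMod 2) ha hc n
  set P := ∏ i ∈ Finset.range (n+1), (1 - (X : (ZMod 2)⟦X⟧) ^ (a + c*i)) with hP
  have hq : qpG (ZMod 2) a c = P + X ^ (n+1) * d := by linear_combination hd
  have hsq : (qpG (ZMod 2) a c) ^ 2
      = P ^ 2 + X ^ (n+1) * (d * (P + (P + X ^ (n+1) * d))) := by rw [hq]; ring
  have hP2 : P ^ 2 = ∏ i ∈ Finset.range (n+1), (1 - (X : (ZMod 2)⟦X⟧) ^ (2*a + 2*c*i)) := by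
    rw [hP, ← Finset.prod_pow]
    apply Finset.prod_congr rfl
    intro i _
    rw [sq_one_sub_xpow]
    congr 1
    ring
  have h0 : PowerSeries.coeff n
      (X ^ (n+1) * (d * (P + (P + X ^ (n+1) * d)))) = 0 :=
    PowerSeries.X_pow_dvd_iff.mp ⟨_, rfl⟩ n (Nat.lt_succ_self n)
  rw [hsq, map_add, h0, add_zero, hP2,
    coeff_qpG (by omega) (by omega) (Nat.lt_succ_self n)]

theorem map_mk {R R' : Type*} [CommRing R] [CommRing R'] (f : R →+* R') (g : ℕ → R) :
    PowerSeries.map f (PowerSeries.mk g) = PowerSeries.mk (fun n => f (g n)) := by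
  ext n
  rw [PowerSeries.coeff_map, PowerSeries.coeff_mk, PowerSeries.coeff_mk]

theorem EOseries_eq (EObar : ℕ → ℕ)
    (hEO : PowerSeries.mk (fun n => (EObar n : ℚ)) = qpG ℚ 4 4 ^ 3 * (qpG ℚ 2 2 ^ 2)⁻¹) :
    PowerSeries.mk (fun n => (EObar n : ZMod 2)) = qpG (ZMod 2) 8 8 := by
  have hu : constantCoeff (qpG ℚ 2 2 ^ 2) ≠ 0 := by
    rw [map_pow, constantCoeff_qpG (by norm_num)]; norm_num
  have hQ : PowerSeries.mk (fun n => (EObar n : ℚ)) * qpG ℚ 2 2 ^ 2 = qpG ℚ 4 4 ^ 3 := by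
    rw [hEO, mul_assoc, PowerSeries.inv_mul_cancel _ hu, mul_one]
  -- descend to ℤ
  have hZ : PowerSeries.mk (fun n => (EObar n : ℤ)) * qpG ℤ 2 2 ^ 2 = qpG ℤ 4 4 ^ 3 := by
    apply map_PS_injective (f := Int.castRingHom ℚ) (fun x y h => by simpa using h)
    have hmk : PowerSeries.map (Int.castRingHom ℚ) (PowerSeries.mk fun n => (EObar n : ℤ))
        = PowerSeries.mk (fun n => (EObar n : ℚ)) := by
      rw [map_mk]; ext n; simp
    rw [map_mul, map_pow, map_pow, map_qpG, map_qpG, hmk, hQ]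
  -- push to ZMod 2
  have h2 : PowerSeries.mk (fun n => (EObar n : ZMod 2)) * qpG (ZMod 2) 2 2 ^ 2
      = qpG (ZMod 2) 4 4 ^ 3 := by
    have hmk : PowerSeries.map (Int.castRingHom (ZMod 2)) (PowerSeries.mk fun n => (EObar n : ℤ))
        = PowerSeries.mk (fun n => (EObar n : ZMod 2)) := by
      rw [map_mk]; ext n; simp
    have := congrArg (PowerSeries.map (Int.castRingHom (ZMod 2))) hZ
    rw [map_mul, map_pow, map_pow, map_qpG, map_qpG, hmk] at this
    exact this
  have h22 : qpG (ZMod 2) 2 2 ^ 2 = qpG (ZMod 2) 4 4 := by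
    have := qpG_sq (a := 2) (c := 2) (by norm_num) (by norm_num)
    norm_num at this
    exact this
  have h44 : qpG (ZMod 2) 4 4 ^ 2 = qpG (ZMod 2) 8 8 := by
    have := qpG_sq (a := 4) (c := 4) (by norm_num) (by norm_num)
    norm_num at this
    exact this
  rw [h22] at h2
  have hne : qpG (ZMod 2) 4 4 ≠ 0 := by
    intro h
    have := constantCoeff_qpG (R := ZMod 2) (a := 4) (c := 4) (by norm_num)
    rw [h] at this
    simp at this
  apply mul_right_cancel₀ hne
  rw [h2, ← h44]
  ring

theorem coeff_qpG88_card (N : ℕ) :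
    PowerSeries.coeff N (qpG (ZMod 2) 8 8)
      = (((Finset.range (N+1)).powerset.filter
          (fun t => ∑ i ∈ t, (8 + 8*i) = N)).card : ZMod 2) := by
  rw [coeff_qpG (by norm_num) (by norm_num) (Nat.lt_succ_self N)]
  have h1 : ∀ i ∈ Finset.range (N+1),
      (1 - (X : (ZMod 2)⟦X⟧) ^ (8 + 8*i)) = X ^ (8 + 8*i) + 1 := by
    intro i _
    linear_combination (-(X : (ZMod 2)⟦X⟧) ^ (8 + 8*i)) * two_eq_zero_PS
  rw [Finset.prod_congr rfl h1, Finset.prod_add]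
  rw [map_sum]
  have h2 : ∀ t ∈ (Finset.range (N+1)).powerset,
      PowerSeries.coeff N
        ((∏ i ∈ t, (X : (ZMod 2)⟦X⟧) ^ (8 + 8*i)) * ∏ i ∈ Finset.range (N+1) \ t, 1)
      = if (∑ i ∈ t, (8 + 8*i)) = N then 1 else 0 := by
    intro t _
    rw [Finset.prod_const_one, mul_one, Finset.prod_pow_eq_pow_sum, PowerSeries.coeff_X_pow]
    by_cases h : (∑ i ∈ t, (8 + 8*i)) = N
    · rw [if_pos h, if_pos h.symm]
    · rw [if_neg h, if_neg (fun hh => h hh.symm)]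
  rw [Finset.sum_congr rfl h2, Finset.sum_boole]


def runB (S : Finset ℕ) : ℕ :=
  if h : S.Nonempty then
    (S.filter fun x => Finset.Icc x (S.max' h) ⊆ S).min'
      ⟨S.max' h, by
        rw [Finset.mem_filter]
        refine ⟨S.max'_mem h, fun y hy => ?_⟩
        rw [Finset.mem_Icc] at hy
        have : y = S.max' h := le_antisymm hy.2 hy.1
        rw [this]; exact S.max'_mem h⟩
  else 0

def phi (S : Finset ℕ) : Finset ℕ :=
  if h : S.Nonempty then
    if S.min' h + runB S ≤ S.max' h + 1 then
      ((S.erase (S.min' h)) \ Finset.Icc (S.max' h + 1 - S.min' h) (S.max' h)) ∪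
        Finset.Icc (S.max' h + 2 - S.min' h) (S.max' h + 1)
    else
      ((S \ Finset.Icc (runB S) (S.max' h)) ∪ Finset.Icc (runB S - 1) (S.max' h - 1)) ∪
        {S.max' h + 1 - runB S}
  else ∅

theorem runB_spec {S : Finset ℕ} (h : S.Nonempty) :
    runB S ∈ S ∧ Finset.Icc (runB S) (S.max' h) ⊆ S := by
  rw [runB, dif_pos h]
  have := Finset.min'_mem (S.filter fun x => Finset.Icc x (S.max' h) ⊆ S)
    ⟨S.max' h, by
      rw [Finset.mem_filter]
      refine ⟨S.max'_mem h, fun y hy => ?_⟩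
      rw [Finset.mem_Icc] at hy
      have : y = S.max' h := le_antisymm hy.2 hy.1
      rw [this]; exact S.max'_mem h⟩
  rw [Finset.mem_filter] at this
  exact this

theorem runB_le {S : Finset ℕ} (h : S.Nonempty) {x : ℕ} (hx : x ∈ S)
    (hI : Finset.Icc x (S.max' h) ⊆ S) : runB S ≤ x := by
  rw [runB, dif_pos h]
  exact Finset.min'_le _ _ (Finset.mem_filter.mpr ⟨hx, hI⟩)

theorem runB_pos {S : Finset ℕ} (h : S.Nonempty) (h0 : 0 ∉ S) : 1 ≤ runB S := by
  have := (runB_spec h).1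
  rcases Nat.eq_zero_or_pos (runB S) with h' | h'
  · exact absurd (h' ▸ this) h0
  · exact h'

theorem runB_le_max {S : Finset ℕ} (h : S.Nonempty) : runB S ≤ S.max' h :=
  Finset.le_max' _ _ (runB_spec h).1

theorem runB_pred_notmem {S : Finset ℕ} (h : S.Nonempty) (h0 : 0 ∉ S) :
    runB S - 1 ∉ S := by
  intro hmem
  have hspec := runB_spec h
  have ht1 : 1 ≤ runB S := runB_pos h h0
  have hle : runB S ≤ runB S - 1 := by
    apply runB_le h hmem
    intro y hy
    rw [Finset.mem_Icc] at hy
    rcases Nat.eq_or_lt_of_le hy.1 with h' | h'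
    · rwa [← h']
    · exact hspec.2 (Finset.mem_Icc.mpr ⟨by omega, hy.2⟩)
  omega

theorem runB_eq {S : Finset ℕ} (h : S.Nonempty) {b : ℕ} (hb : b ∈ S)
    (hI : Finset.Icc b (S.max' h) ⊆ S) (hbp : b - 1 ∉ S) (hb1 : 1 ≤ b) : runB S = b := by
  have h1 := runB_le h hb hI
  rcases Nat.lt_or_ge (runB S) b with hlt | hge
  · exfalso
    apply hbp
    exact (runB_spec h).2 (Finset.mem_Icc.mpr ⟨by omega, by have := Finset.le_max' S b hb; omega⟩)
  · omega

theorem phi_eq_case1 {S : Finset ℕ} (h : S.Nonempty) {a s : ℕ}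
    (ha : S.max' h = a) (hs : S.min' h = s)
    (hc : S.min' h + runB S ≤ S.max' h + 1) :
    phi S = ((S.erase s) \ Finset.Icc (a + 1 - s) a) ∪ Finset.Icc (a + 2 - s) (a + 1) := by
  rw [phi, dif_pos h, if_pos hc, ha, hs]

theorem phi_eq_case2 {S : Finset ℕ} (h : S.Nonempty) {a t : ℕ}
    (ha : S.max' h = a) (ht : runB S = t)
    (hc : ¬ (S.min' h + runB S ≤ S.max' h + 1)) :
    phi S = ((S \ Finset.Icc t a) ∪ Finset.Icc (t - 1) (a - 1)) ∪ {a + 1 - t} := by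
  rw [phi, dif_pos h, if_neg hc, ha, ht]

theorem max'_eqc {S : Finset ℕ} (h : S.Nonempty) {b : ℕ} (hb : b ∈ S)
    (hub : ∀ x ∈ S, x ≤ b) : S.max' h = b :=
  le_antisymm (Finset.max'_le _ h _ hub) (Finset.le_max' _ _ hb)

theorem min'_eqc {S : Finset ℕ} (h : S.Nonempty) {b : ℕ} (hb : b ∈ S)
    (hub : ∀ x ∈ S, b ≤ x) : S.min' h = b :=
  le_antisymm (Finset.min'_le _ _ hb) (Finset.le_min' _ h _ hub)

theorem sum_Icc_aux {u v : ℕ} (h : u ≤ v + 1) :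
    (∑ i ∈ Finset.Icc u v, i) * 2 + u * (u - 1) = (v + 1) * v := by
  have h1 : ∑ i ∈ Finset.Ico 0 u, i + ∑ i ∈ Finset.Ico u (v+1), i
      = ∑ i ∈ Finset.Ico 0 (v+1), i :=
    Finset.sum_Ico_consecutive _ (Nat.zero_le u) h
  rw [← Finset.range_eq_Ico, ← Finset.range_eq_Ico, Finset.Ico_add_one_right_eq_Icc] at h1
  have g1 := Finset.sum_range_id_mul_two u
  have g2 := Finset.sum_range_id_mul_two (v+1)
  simp only [Nat.add_sub_cancel] at g2
  linarith

theorem sum_Icc_shift {u v : ℕ} (h : u ≤ v) :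
    ∑ i ∈ Finset.Icc (u+1) (v+1), i = (∑ i ∈ Finset.Icc u v, i) + (v + 1 - u) := by
  have himg : (Finset.Icc u v).image (· + 1) = Finset.Icc (u+1) (v+1) :=
    Finset.image_add_right_Icc u v 1
  rw [← himg, Finset.sum_image (by intro x _ y _ hxy; dsimp only at hxy; omega)]
  rw [Finset.sum_add_distrib, Finset.sum_const, smul_eq_mul, mul_one, Nat.card_Icc]

theorem case1 {M : ℕ} (H : ∀ m : ℕ, m * m ≠ 24 * M + 1) {S : Finset ℕ}
    (h : S.Nonempty) (h0 : 0 ∉ S) (hsum : ∑ x ∈ S, x = M)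
    (hc : S.min' h + runB S ≤ S.max' h + 1) :
    0 ∉ phi S ∧ (∑ x ∈ phi S, x = M) ∧ (phi S).card + 1 = S.card ∧ phi (phi S) = S := by
  obtain ⟨a, ha⟩ : ∃ a, S.max' h = a := ⟨_, rfl⟩
  obtain ⟨s, hs⟩ : ∃ s, S.min' h = s := ⟨_, rfl⟩
  obtain ⟨t, ht⟩ : ∃ t, runB S = t := ⟨_, rfl⟩
  rw [ha, hs, ht] at hc
  have hs_mem : s ∈ S := hs ▸ S.min'_mem h
  have ha_mem : a ∈ S := ha ▸ S.max'_mem h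
  have ht_mem : t ∈ S := ht ▸ (runB_spec h).1
  have ht_Icc : Finset.Icc t a ⊆ S := by
    have := (runB_spec h).2; rwa [ha, ht] at this
  have ht_sub : ∀ x, t ≤ x → x ≤ a → x ∈ S := fun x h1 h2 =>
    ht_Icc (Finset.mem_Icc.mpr ⟨h1, h2⟩)
  have ht_pred : t - 1 ∉ S := ht ▸ runB_pred_notmem h h0
  have hs1 : 1 ≤ s := by
    rcases Nat.eq_zero_or_pos s with h' | h'
    · exact absurd (h' ▸ hs_mem) h0
    · exact h'
  have hbounds : ∀ x ∈ S, s ≤ x ∧ x ≤ a := fun x hx =>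
    ⟨hs ▸ S.min'_le x hx, ha ▸ S.le_max' x hx⟩
  have hst : s ≤ t := (hbounds t ht_mem).1
  have hta : t ≤ a := (hbounds t ht_mem).2
  -- non-exceptional case: 2*s ≤ a
  have h2s : 2 * s ≤ a := by
    by_contra hlt
    push_neg at hlt
    have hts : t = s := by omega
    have hSeq : S = Finset.Icc s a := by
      apply Finset.Subset.antisymm
      · intro x hx
        exact Finset.mem_Icc.mpr (hbounds x hx)
      · intro x hx
        rw [Finset.mem_Icc] at hx
        exact ht_sub x (by omega) hx.2
    have ha2 : a = 2 * s - 1 := by omega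
    have e := sum_Icc_aux (u := s) (v := a) (by omega)
    rw [← hSeq, hsum, ha2] at e
    apply H (6 * s - 1)
    zify [hs1, show 1 ≤ 6 * s by omega, show 1 ≤ 2 * s by omega] at e ⊢
    linear_combination -12 * e
  -- the case-1 picture
  have hphi : phi S = ((S.erase s) \ Finset.Icc (a + 1 - s) a) ∪ Finset.Icc (a + 2 - s) (a + 1) :=
    phi_eq_case1 h ha hs (by rw [ha, hs, ht]; exact hc)
  have hmemD : ∀ x, x ∈ (S.erase s) \ Finset.Icc (a + 1 - s) a ↔
      (x ∈ S ∧ x ≠ s ∧ x < a + 1 - s) := by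
    intro x
    rw [Finset.mem_sdiff, Finset.mem_erase, Finset.mem_Icc]
    constructor
    · rintro ⟨⟨hne, hxS⟩, hni⟩
      have := (hbounds x hxS).2
      exact ⟨hxS, hne, by omega⟩
    · rintro ⟨hxS, hne, hlt⟩
      exact ⟨⟨hne, hxS⟩, by omega⟩
  have hmemPhi : ∀ x, x ∈ phi S ↔
      ((x ∈ S ∧ x ≠ s ∧ x < a + 1 - s) ∨ (a + 2 - s ≤ x ∧ x ≤ a + 1)) := by
    intro x
    rw [hphi, Finset.mem_union, hmemD, Finset.mem_Icc]
  have hIccS : ∀ x, a + 1 - s ≤ x → x ≤ a → x ∈ S := fun x h1 h2 =>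
    ht_sub x (by omega) h2
  -- sums
  have hsub1 : Finset.Icc (a + 1 - s) a ⊆ S.erase s := by
    intro x hx
    rw [Finset.mem_Icc] at hx
    rw [Finset.mem_erase]
    exact ⟨by omega, hIccS x hx.1 hx.2⟩
  have e1 : ∑ x ∈ (S.erase s) \ Finset.Icc (a + 1 - s) a, x
      + ∑ x ∈ Finset.Icc (a + 1 - s) a, x = ∑ x ∈ S.erase s, x :=
    Finset.sum_sdiff hsub1
  have e2 : ∑ x ∈ S.erase s, x + s = M := by
    rw [← hsum]
    exact Finset.sum_erase_add S _ hs_mem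
  have e3 : ∑ x ∈ Finset.Icc (a + 2 - s) (a + 1), x
      = ∑ x ∈ Finset.Icc (a + 1 - s) a, x + (a + 1 - (a + 1 - s)) := by
    have h' := sum_Icc_shift (u := a + 1 - s) (v := a) (by omega)
    rw [show a + 1 - s + 1 = a + 2 - s by omega] at h'
    exact h'
  have hdisj : Disjoint ((S.erase s) \ Finset.Icc (a + 1 - s) a)
      (Finset.Icc (a + 2 - s) (a + 1)) := by
    rw [Finset.disjoint_left]
    intro x hx hx2
    rw [hmemD] at hx
    rw [Finset.mem_Icc] at hx2
    omega
  have sum_phi : ∑ x ∈ phi S, x = M := by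
    rw [hphi, Finset.sum_union hdisj]
    omega
  -- cards
  have c1 : ((S.erase s) \ Finset.Icc (a + 1 - s) a).card + (Finset.Icc (a + 1 - s) a).card
      = (S.erase s).card := Finset.card_sdiff_add_card_eq_card hsub1
  have c2 : (S.erase s).card + 1 = S.card := Finset.card_erase_add_one hs_mem
  have card_phi : (phi S).card + 1 = S.card := by
    rw [hphi, Finset.card_union_of_disjoint hdisj]
    rw [Nat.card_Icc] at c1 ⊢
    omega
  -- 0 not in phi S
  have zero_not : 0 ∉ phi S := by
    intro h'
    rcases (hmemPhi 0).1 h' with ⟨h1, _, _⟩ | ⟨h1, _⟩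
    · exact h0 h1
    · omega
  -- involution
  have hne1 : (phi S).Nonempty := ⟨a + 1, (hmemPhi (a + 1)).2 (Or.inr ⟨by omega, le_refl _⟩)⟩
  have hmax1 : (phi S).max' hne1 = a + 1 := by
    apply max'_eqc hne1 ((hmemPhi (a + 1)).2 (Or.inr ⟨by omega, le_refl _⟩))
    intro x hx
    rcases (hmemPhi x).1 hx with ⟨hxS, _, _⟩ | ⟨_, h2⟩
    · have := (hbounds x hxS).2; omega
    · omega
  have hminlb : ∀ x ∈ phi S, s + 1 ≤ x := by
    intro x hx
    rcases (hmemPhi x).1 hx with ⟨hxS, hne, _⟩ | ⟨h1, _⟩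
    · have := (hbounds x hxS).1; omega
    · omega
  have hrunB1 : runB (phi S) = a + 2 - s := by
    apply runB_eq hne1 ((hmemPhi (a + 2 - s)).2 (Or.inr ⟨le_refl _, by omega⟩))
    · rw [hmax1]
      intro y hy
      rw [Finset.mem_Icc] at hy
      exact (hmemPhi y).2 (Or.inr hy)
    · intro hmem
      rcases (hmemPhi (a + 2 - s - 1)).1 hmem with ⟨hxS, hne, hlt⟩ | ⟨h1, _⟩
      · omega
      · omega
    · omega
  have hcond2 : ¬ ((phi S).min' hne1 + runB (phi S) ≤ (phi S).max' hne1 + 1) := by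
    have hmlb := hminlb _ ((phi S).min'_mem hne1)
    rw [hmax1, hrunB1]
    omega
  have hphi2 := phi_eq_case2 hne1 hmax1 hrunB1 hcond2
  rw [show Finset.Icc (a + 2 - s - 1) (a + 1 - 1) = Finset.Icc (a + 1 - s) a by
        congr 1 <;> omega,
      show a + 1 + 1 - (a + 2 - s) = s by omega] at hphi2
  have final : phi (phi S) = S := by
    rw [hphi2]
    ext x
    simp only [Finset.mem_union, Finset.mem_sdiff, Finset.mem_Icc, Finset.mem_singleton,
      hmemPhi x]
    by_cases hx : x ∈ S
    · have hb := hbounds x hx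
      simp only [hx, true_and, iff_true]
      omega
    · have h1 : ¬(a + 1 - s ≤ x ∧ x ≤ a) := fun hh => hx (hIccS x hh.1 hh.2)
      have h2 : x ≠ s := fun he => hx (he ▸ hs_mem)
      simp only [hx, false_and, false_or, iff_false]
      omega
  exact ⟨zero_not, sum_phi, card_phi, final⟩

theorem case2 {M : ℕ} (H : ∀ m : ℕ, m * m ≠ 24 * M + 1) {S : Finset ℕ}
    (h : S.Nonempty) (h0 : 0 ∉ S) (hsum : ∑ x ∈ S, x = M)
    (hc : ¬ (S.min' h + runB S ≤ S.max' h + 1)) :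
    0 ∉ phi S ∧ (∑ x ∈ phi S, x = M) ∧ (phi S).card = S.card + 1 ∧ phi (phi S) = S := by
  obtain ⟨a, ha⟩ : ∃ a, S.max' h = a := ⟨_, rfl⟩
  obtain ⟨s, hs⟩ : ∃ s, S.min' h = s := ⟨_, rfl⟩
  obtain ⟨t, ht⟩ : ∃ t, runB S = t := ⟨_, rfl⟩
  rw [ha, hs, ht] at hc
  push_neg at hc
  have hs_mem : s ∈ S := hs ▸ S.min'_mem h
  have ha_mem : a ∈ S := ha ▸ S.max'_mem h
  have ht_mem : t ∈ S := ht ▸ (runB_spec h).1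
  have ht_Icc : Finset.Icc t a ⊆ S := by
    have := (runB_spec h).2; rwa [ha, ht] at this
  have ht_sub : ∀ x, t ≤ x → x ≤ a → x ∈ S := fun x h1 h2 =>
    ht_Icc (Finset.mem_Icc.mpr ⟨h1, h2⟩)
  have ht_pred : t - 1 ∉ S := ht ▸ runB_pred_notmem h h0
  have hs1 : 1 ≤ s := by
    rcases Nat.eq_zero_or_pos s with h' | h'
    · exact absurd (h' ▸ hs_mem) h0
    · exact h'
  have hbounds : ∀ x ∈ S, s ≤ x ∧ x ≤ a := fun x hx =>
    ⟨hs ▸ S.min'_le x hx, ha ▸ S.le_max' x hx⟩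
  have hst : s ≤ t := (hbounds t ht_mem).1
  have hta : t ≤ a := (hbounds t ht_mem).2
  -- non-exceptional: a + 3 ≤ 2 * t
  have h2t : a + 3 ≤ 2 * t := by
    by_contra hlt
    push_neg at hlt
    have hts : t = s := by omega
    have hSeq : S = Finset.Icc t a := by
      apply Finset.Subset.antisymm
      · intro x hx
        rw [Finset.mem_Icc]
        have := hbounds x hx
        omega
      · exact ht_Icc
    have ha2 : a = 2 * t - 2 := by omega
    have ht2 : 2 ≤ t := by omega
    have e := sum_Icc_aux (u := t) (v := a) (by omega)
    rw [← hSeq, hsum, ha2] at e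
    apply H (6 * t - 5)
    zify [show 1 ≤ t by omega, show 5 ≤ 6 * t by omega, show 2 ≤ 2 * t by omega,
      show 1 ≤ 2 * t - 2 + 1 by omega, show 2 ≤ 2 * t - 2 + 2 by omega] at e ⊢
    linear_combination -12 * e
  -- picture
  have hphi : phi S = ((S \ Finset.Icc t a) ∪ Finset.Icc (t - 1) (a - 1)) ∪ {a + 1 - t} :=
    phi_eq_case2 h ha ht (by rw [ha, hs, ht]; omega)
  have hmemD : ∀ x, x ∈ S \ Finset.Icc t a ↔ (x ∈ S ∧ x < t) := by
    intro x
    rw [Finset.mem_sdiff, Finset.mem_Icc]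
    constructor
    · rintro ⟨hxS, hni⟩
      have := (hbounds x hxS).2
      exact ⟨hxS, by omega⟩
    · rintro ⟨hxS, hlt⟩
      exact ⟨hxS, by omega⟩
  have hmemPhi : ∀ x, x ∈ phi S ↔
      ((x ∈ S ∧ x < t) ∨ (t - 1 ≤ x ∧ x ≤ a - 1) ∨ x = a + 1 - t) := by
    intro x
    rw [hphi, Finset.mem_union, Finset.mem_union, hmemD, Finset.mem_Icc, Finset.mem_singleton,
      or_assoc]
  -- sums
  have eA : ∑ x ∈ S \ Finset.Icc t a, x + ∑ x ∈ Finset.Icc t a, x = M := by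
    rw [← hsum]; exact Finset.sum_sdiff ht_Icc
  have eB : ∑ x ∈ Finset.Icc t a, x
      = ∑ x ∈ Finset.Icc (t - 1) (a - 1), x + (a - (t - 1)) := by
    have h' := sum_Icc_shift (u := t - 1) (v := a - 1) (by omega)
    rw [show t - 1 + 1 = t by omega, show a - 1 + 1 = a by omega] at h'
    exact h'
  have d1 : Disjoint (S \ Finset.Icc t a) (Finset.Icc (t - 1) (a - 1)) := by
    rw [Finset.disjoint_left]
    intro x hx1 hx2
    rw [hmemD] at hx1
    rw [Finset.mem_Icc] at hx2
    have : x = t - 1 := by omega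
    exact ht_pred (this ▸ hx1.1)
  have d2 : Disjoint ((S \ Finset.Icc t a) ∪ Finset.Icc (t - 1) (a - 1)) {a + 1 - t} := by
    rw [Finset.disjoint_singleton_right, Finset.mem_union, hmemD, Finset.mem_Icc]
    rintro (⟨hmem, _⟩ | ⟨h1, _⟩)
    · have := (hbounds _ hmem).1; omega
    · omega
  have sum_phi : ∑ x ∈ phi S, x = M := by
    rw [hphi, Finset.sum_union d2, Finset.sum_union d1, Finset.sum_singleton]
    omega
  -- cards
  have cA : (S \ Finset.Icc t a).card + (Finset.Icc t a).card = S.card :=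
    Finset.card_sdiff_add_card_eq_card ht_Icc
  have card_phi : (phi S).card = S.card + 1 := by
    rw [hphi, Finset.card_union_of_disjoint d2, Finset.card_union_of_disjoint d1,
      Finset.card_singleton]
    rw [Nat.card_Icc] at cA ⊢
    omega
  have zero_not : 0 ∉ phi S := by
    intro h'
    rcases (hmemPhi 0).1 h' with ⟨h1, _⟩ | ⟨h1, _⟩ | h1
    · exact h0 h1
    · omega
    · omega
  -- involution
  have hσmem : a + 1 - t ∈ phi S := (hmemPhi _).2 (Or.inr (Or.inr rfl))
  have hne2 : (phi S).Nonempty := ⟨a + 1 - t, hσmem⟩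
  have hmax2 : (phi S).max' hne2 = a - 1 := by
    apply max'_eqc hne2 ((hmemPhi (a - 1)).2 (Or.inr (Or.inl ⟨by omega, le_refl _⟩)))
    intro x hx
    rcases (hmemPhi x).1 hx with ⟨hxS, hlt⟩ | ⟨_, h2⟩ | h1
    · omega
    · omega
    · omega
  have hmin2 : (phi S).min' hne2 = a + 1 - t := by
    apply min'_eqc hne2 hσmem
    intro x hx
    rcases (hmemPhi x).1 hx with ⟨hxS, _⟩ | ⟨h1, _⟩ | h1
    · have := (hbounds x hxS).1; omega
    · omega
    · omega
  have hrunBlb : runB (phi S) ≤ t - 1 := by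
    apply runB_le hne2 ((hmemPhi (t - 1)).2 (Or.inr (Or.inl ⟨le_refl _, by omega⟩)))
    rw [hmax2]
    intro y hy
    rw [Finset.mem_Icc] at hy
    exact (hmemPhi y).2 (Or.inr (Or.inl hy))
  have hcond1 : (phi S).min' hne2 + runB (phi S) ≤ (phi S).max' hne2 + 1 := by
    rw [hmin2, hmax2]
    omega
  have hphi2 := phi_eq_case1 hne2 hmax2 hmin2 hcond1
  rw [show Finset.Icc (a - 1 + 1 - (a + 1 - t)) (a - 1) = Finset.Icc (t - 1) (a - 1) by
        congr 1; omega,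
      show a - 1 + 2 - (a + 1 - t) = t by omega, show a - 1 + 1 = a by omega] at hphi2
  have final : phi (phi S) = S := by
    rw [hphi2]
    ext x
    simp only [Finset.mem_union, Finset.mem_sdiff, Finset.mem_erase, Finset.mem_Icc,
      hmemPhi x]
    by_cases hx : x ∈ S
    · have hb := hbounds x hx
      have hxt : x ≠ t - 1 := fun he => ht_pred (he ▸ hx)
      simp only [hx, true_and, iff_true]
      omega
    · have h1 : ¬(t ≤ x ∧ x ≤ a) := fun hh => hx (ht_sub x hh.1 hh.2)
      simp only [hx, false_and, false_or, iff_false]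
      omega
  exact ⟨zero_not, sum_phi, card_phi, final⟩

theorem even_card_A (M : ℕ) (H : ∀ m : ℕ, m * m ≠ 24 * M + 1) :
    2 ∣ ((Finset.range (M + 1)).powerset.filter
      (fun S => 0 ∉ S ∧ ∑ x ∈ S, x = M)).card := by
  classical
  set 𝒜 := (Finset.range (M + 1)).powerset.filter
      (fun S => 0 ∉ S ∧ ∑ x ∈ S, x = M) with hA
  have hM1 : 1 ≤ M := by
    rcases Nat.eq_zero_or_pos M with h | h
    · exact absurd (by rw [h]) (H 1)
    · exact h
  have memA : ∀ T, T ∈ 𝒜 ↔ (0 ∉ T ∧ ∑ x ∈ T, x = M) := by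
    intro T
    rw [hA, Finset.mem_filter, Finset.mem_powerset]
    constructor
    · exact fun h => h.2
    · intro hT
      refine ⟨?_, hT⟩
      intro x hx
      rw [Finset.mem_range]
      have h2 : x ≤ ∑ y ∈ T, y :=
        Finset.single_le_sum (f := fun x : ℕ => x) (fun i _ => Nat.zero_le i) hx
      omega
  have hkey : ∀ T ∈ 𝒜, phi T ∈ 𝒜 ∧ phi (phi T) = T ∧
      ((phi T).card + 1 = T.card ∨ (phi T).card = T.card + 1) := by
    intro T hT
    rw [memA] at hT
    have hne : T.Nonempty := by
      rcases Finset.eq_empty_or_nonempty T with h | h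
      · exfalso
        rw [h] at hT
        simp at hT
        omega
      · exact h
    by_cases hcond : T.min' hne + runB T ≤ T.max' hne + 1
    · obtain ⟨z, sm, cd, inv⟩ := case1 H hne hT.1 hT.2 hcond
      exact ⟨(memA _).2 ⟨z, sm⟩, inv, Or.inl cd⟩
    · obtain ⟨z, sm, cd, inv⟩ := case2 H hne hT.1 hT.2 hcond
      exact ⟨(memA _).2 ⟨z, sm⟩, inv, Or.inr cd⟩
  have hcard : (𝒜.filter (fun S => (phi S).card < S.card)).card
      = (𝒜.filter (fun S => ¬ (phi S).card < S.card)).card := by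
    apply Finset.card_bij' (i := fun S _ => phi S) (j := fun S _ => phi S)
    · intro T hT
      rw [Finset.mem_filter] at hT
      obtain ⟨hmem, hinv, hcd⟩ := hkey T hT.1
      rw [Finset.mem_filter]
      refine ⟨hmem, ?_⟩
      rw [hinv]
      omega
    · intro T hT
      rw [Finset.mem_filter] at hT
      obtain ⟨hmem, hinv, hcd⟩ := hkey T hT.1
      rw [Finset.mem_filter]
      refine ⟨hmem, ?_⟩
      rw [hinv]
      omega
    · intro T hT
      rw [Finset.mem_filter] at hT
      exact (hkey T hT.1).2.1
    · intro T hT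
      rw [Finset.mem_filter] at hT
      exact (hkey T hT.1).2.1
  have hBC := Finset.card_filter_add_card_filter_not
    (s := 𝒜) (p := fun S => (phi S).card < S.card)
  omega

theorem even_card_t (N : ℕ) (H : ∀ m : ℕ, m * m ≠ 3 * N + 1) :
    2 ∣ ((Finset.range (N + 1)).powerset.filter
      (fun t => ∑ i ∈ t, (8 + 8 * i) = N)).card := by
  classical
  by_cases h8 : 8 ∣ N
  · obtain ⟨K, hK⟩ := h8
    have H' : ∀ m : ℕ, m * m ≠ 24 * K + 1 := fun m hm => H m (by omega)
    have hK1 : 1 ≤ K := by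
      rcases Nat.eq_zero_or_pos K with h' | h'
      · exact absurd (by rw [h']) (H' 1)
      · exact h'
    have hcard : ((Finset.range (N + 1)).powerset.filter
        (fun t => ∑ i ∈ t, (8 + 8 * i) = N)).card
        = ((Finset.range (K + 1)).powerset.filter
        (fun S => 0 ∉ S ∧ ∑ x ∈ S, x = K)).card := by
      refine Finset.card_bij' (i := fun t _ => t.image (fun i => i + 1))
        (j := fun S _ => S.image (fun x => x - 1)) ?hi ?hj ?left ?right
      case hi =>
        intro t ht
        rw [Finset.mem_filter, Finset.mem_powerset] at ht
        obtain ⟨hsub, hsum⟩ := ht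
        have hsum8 : 8 * (∑ i ∈ t, (i + 1)) = 8 * K := by
          rw [Finset.mul_sum, ← hK, ← hsum]
          apply Finset.sum_congr rfl
          intro i _
          ring
        have hsumK : ∑ i ∈ t, (i + 1) = K := by omega
        rw [Finset.mem_filter, Finset.mem_powerset]
        refine ⟨?_, ?_, ?_⟩
        · intro x hx
          rw [Finset.mem_image] at hx
          obtain ⟨i, hi, rfl⟩ := hx
          rw [Finset.mem_range]
          have : i + 1 ≤ ∑ i ∈ t, (i + 1) :=
            Finset.single_le_sum (f := fun i : ℕ => i + 1) (fun i _ => Nat.zero_le _) hi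
          omega
        · intro hmem
          rw [Finset.mem_image] at hmem
          obtain ⟨i, _, hi⟩ := hmem
          omega
        · rw [Finset.sum_image (by intro x _ y _ hxy; dsimp only at hxy; omega)]
          exact hsumK
      case hj =>
        intro S hS
        rw [Finset.mem_filter, Finset.mem_powerset] at hS
        obtain ⟨hsub, h0, hsum⟩ := hS
        have hpos : ∀ x ∈ S, 1 ≤ x := by
          intro x hx
          rcases Nat.eq_zero_or_pos x with h' | h'
          · exact absurd (h' ▸ hx) h0
          · exact h'
        rw [Finset.mem_filter, Finset.mem_powerset]
        constructor
        · intro y hy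
          rw [Finset.mem_image] at hy
          obtain ⟨x, hx, rfl⟩ := hy
          rw [Finset.mem_range]
          have := hsub hx
          rw [Finset.mem_range] at this
          omega
        · rw [Finset.sum_image (by
            intro x hx y hy hxy
            have := hpos x hx
            have := hpos y hy
            dsimp only at hxy
            omega)]
          have : ∀ x ∈ S, 8 + 8 * (x - 1) = 8 * x := by
            intro x hx
            have := hpos x hx
            omega
          rw [Finset.sum_congr rfl this, ← Finset.mul_sum, hsum, hK]
      case left =>
        intro t ht
        show (t.image (fun i => i + 1)).image (fun x => x - 1) = t
        rw [Finset.image_image]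
        have : ∀ x ∈ t, ((fun x : ℕ => x - 1) ∘ fun i => i + 1) x = id x := by
          intro x _
          simp
        rw [Finset.image_congr this, Finset.image_id]
      case right =>
        intro S hS
        rw [Finset.mem_filter, Finset.mem_powerset] at hS
        obtain ⟨hsub, h0, hsum⟩ := hS
        show (S.image (fun x => x - 1)).image (fun i => i + 1) = S
        rw [Finset.image_image]
        have : ∀ x ∈ S, ((fun i : ℕ => i + 1) ∘ fun x => x - 1) x = id x := by
          intro x hx
          have : x ≠ 0 := fun h' => h0 (h' ▸ hx)
          simp only [Function.comp_apply, id]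
          omega
        rw [Finset.image_congr this, Finset.image_id]
    rw [hcard]
    exact even_card_A K H'
  · rw [show ((Finset.range (N + 1)).powerset.filter
        (fun t => ∑ i ∈ t, (8 + 8 * i) = N)).card = 0 from ?_]
    · exact dvd_zero 2
    · rw [Finset.card_eq_zero, Finset.filter_eq_empty_iff]
      intro t _
      intro hsum
      apply h8
      rw [← hsum]
      exact Finset.dvd_sum (fun i _ => ⟨1 + i, by ring⟩)


/-- For a prime `p ≥ 5` with `p ≡ 2 (mod 3)` and `p ∤ j`:
`EObar(p²n + (p²-1)/3 + pj) ≡ 0 (mod 2)`. -/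
theorem EObar_cong_family_mod_two (EObar : ℕ → ℕ)
    (hEO : PowerSeries.mk (fun n => (EObar n : ℚ)) = qp 4 4 ^ 3 * (qp 2 2 ^ 2)⁻¹)
    (p : ℕ) (hp : p.Prime) (hp5 : 5 ≤ p) (hp3 : p % 3 = 2)
    (n j : ℕ) (hj : ¬ p ∣ j) :
    2 ∣ EObar (p ^ 2 * n + (p ^ 2 - 1) / 3 + p * j) := by
  have hqp : ∀ a c : ℕ, qp a c = qpG ℚ a c := fun a c => rfl
  rw [hqp, hqp] at hEO
  set N := p ^ 2 * n + (p ^ 2 - 1) / 3 + p * j with hN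
  obtain ⟨k, hk⟩ : ∃ k, p = 3 * k + 2 := ⟨p / 3, by omega⟩
  have hp2 : p ^ 2 = 9 * k ^ 2 + 12 * k + 4 := by rw [hk]; ring
  have h3dvd : p ^ 2 - 1 = 3 * (3 * k ^ 2 + 4 * k + 1) := by omega
  have hdiv : (p ^ 2 - 1) / 3 = 3 * k ^ 2 + 4 * k + 1 := by
    rw [h3dvd]
    exact Nat.mul_div_cancel_left _ (by norm_num)
  have key : 3 * N + 1 = p * (3 * p * n + p + 3 * j) := by
    rw [hN, hdiv, hk]
    ring
  have Hns : ∀ m : ℕ, m * m ≠ 3 * N + 1 := by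
    intro m hm
    rw [key] at hm
    have hpm : p ∣ m := by
      rcases (Nat.Prime.dvd_mul hp).mp (⟨_, hm⟩ : p ∣ m * m) with h' | h' <;> exact h'
    obtain ⟨m', rfl⟩ := hpm
    have hppos : 0 < p := by omega
    have hcancel : p * (m' * m') = 3 * p * n + p + 3 * j := by
      have h' : p * (p * (m' * m')) = p * (3 * p * n + p + 3 * j) := by
        rw [← hm]; ring
      exact Nat.eq_of_mul_eq_mul_left hppos h'
    have hZ : (p : ℤ) ∣ ((3 * j : ℕ) : ℤ) := by
      refine ⟨(m' : ℤ) * m' - 3 * n - 1, ?_⟩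
      zify at hcancel
      push_cast
      linear_combination -hcancel
    have hdvd3j : p ∣ 3 * j := by exact_mod_cast hZ
    rcases (Nat.Prime.dvd_mul hp).mp hdvd3j with h3 | hjj
    · have := Nat.le_of_dvd (by norm_num) h3
      omega
    · exact hj hjj
  have hser := EOseries_eq EObar hEO
  have hcoeff := congrArg (PowerSeries.coeff (R := ZMod 2) N) hser
  rw [PowerSeries.coeff_mk, coeff_qpG88_card] at hcoeff
  have hdvd := even_card_t N Hns
  have hz : (EObar N : ZMod 2) = 0 := by
    rw [hcoeff, ZMod.natCast_eq_zero_iff]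
    exact hdvd
  exact (ZMod.natCast_eq_zero_iff _ 2).mp hz
end
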